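/- arXiv:2009.14686 — 2 statements merged into one kernel-verified Lean document; each statement's English description precedes it below -/
import Mathlib

section
/- Let an RDS on ℝ be given by a finitely supported measure μ on Homeo⁺(ℝ) satisfying shiftability, and suppose there exists a Radon stationary measure ν̂ for the inverse dynamics that is infinite on neighborhoods of −∞ but finite on half-lines [x, +∞) (a 'semi-infinite' stationary measure). Then for the forward dynamics φ₊ ≡ 1: every random orbit tends to +∞ almost surely. -/
open MeasureTheory ProbabilityTheory Filter Set
open scoped ENNReal Classical

namespace RdsAux

variable {ι : Type*}

/-- deterministic trajectory driven by a word -/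
noncomputable def XX (f : ι → ℝ → ℝ) (x : ℝ) : ℕ → (ℕ → ι) → ℝ
  | 0, _ => x
  | n+1, u => f (u n) (XX f x n u)

lemma XX_det (f : ι → ℝ → ℝ) (x : ℝ) :
    ∀ (n : ℕ) (u v : ℕ → ι), (∀ k < n, u k = v k) → XX f x n u = XX f x n v := by
  intro n
  induction n with
  | zero => intro u v _; rfl
  | succ n ih =>
    intro u v h
    simp only [XX]
    rw [ih u v (fun k hk => h k (Nat.lt_succ_of_lt hk)), h n (Nat.lt_succ_self n)]

noncomputable def extw [Nonempty ι] {s : ℕ} (w : Fin s → ι) : ℕ → ι :=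
  fun m => if h : m < s then w ⟨m, h⟩ else Classical.arbitrary ι

lemma extw_lt [Nonempty ι] {s : ℕ} (w : Fin s → ι) {m : ℕ} (h : m < s) :
    extw w m = w ⟨m, h⟩ := dif_pos h


variable [Fintype ι] [MeasurableSpace ι] [MeasurableSingletonClass ι]
variable {Ω : Type*} [MeasurableSpace Ω] {P : Measure Ω} [IsProbabilityMeasure P]
variable {g : ℕ → Ω → ι} {μ : Measure ι} [IsProbabilityMeasure μ]

set_option linter.unusedSectionVars false

lemma nonempty_of_prob (μ : Measure ι) [IsProbabilityMeasure μ] : Nonempty ι := by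
  by_contra h
  rw [not_nonempty_iff] at h
  have : (univ : Set ι) = ∅ := Set.univ_eq_empty_iff.mpr h
  have h1 : μ univ = 1 := measure_univ
  rw [this, measure_empty] at h1
  exact zero_ne_one h1

lemma cylP [Nonempty ι] (hgmeas : ∀ n, Measurable (g n))
    (hindep : iIndepFun g P)
    (hlaw : ∀ n, Measure.map (g n) P = μ) (s : ℕ) (w : Fin s → ι) :
    P {ω | ∀ j : Fin s, g j ω = w j} = ∏ j, μ {w j} := by
  have hset : {ω | ∀ j : Fin s, g j ω = w j}
      = ⋂ k ∈ Finset.range s, g k ⁻¹' {extw w k} := by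
    ext ω
    simp only [mem_setOf_eq, Set.mem_iInter, Finset.mem_range, mem_preimage,
      mem_singleton_iff]
    constructor
    · intro h k hk; rw [extw_lt w hk]; exact h ⟨k, hk⟩
    · intro h j; have := h j.1 j.2; rwa [extw_lt w j.2] at this
  rw [hset, (iIndepFun_iff_measure_inter_preimage_eq_mul.1 hindep) (Finset.range s)
    (fun k _ => measurableSet_singleton _)]
  have hmap : ∀ k : ℕ, P (g k ⁻¹' {extw w k}) = μ {extw w k} := by
    intro k
    rw [← hlaw k, Measure.map_apply (hgmeas k) (measurableSet_singleton _)]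
  calc ∏ k ∈ Finset.range s, P (g k ⁻¹' {extw w k})
      = ∏ k ∈ Finset.range s, μ {extw w k} := Finset.prod_congr rfl (fun k _ => hmap k)
    _ = ∏ j : Fin s, μ {extw w j.1} := (Fin.prod_univ_eq_prod_range (fun k => μ {extw w k}) s).symm
    _ = ∏ j, μ {w j} := Finset.prod_congr rfl (fun j _ => by rw [extw_lt w j.2])

/-- transfer: probability of an `s`-determined event as a sum over words -/
lemma transfer [Nonempty ι] (hgmeas : ∀ n, Measurable (g n))
    (hindep : iIndepFun g P)
    (hlaw : ∀ n, Measure.map (g n) P = μ) (s : ℕ) (U : Set (ℕ → ι))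
    (hU : ∀ u v, (∀ k < s, u k = v k) → u ∈ U → v ∈ U) :
    P ((fun ω k => g k ω) ⁻¹' U)
      = ∑ w : Fin s → ι, U.indicator (fun _ => ∏ j, μ {w j}) (extw w) := by
  have hagree : ∀ (ω : Ω) (w : Fin s → ι), (∀ j : Fin s, g j ω = w j) →
      ∀ k < s, extw w k = g k ω := by
    intro ω w h k hk
    rw [extw_lt w hk]; exact (h ⟨k, hk⟩).symm
  have hdecomp : (fun ω k => g k ω) ⁻¹' U
      = ⋃ w : Fin s → ι, (if extw w ∈ U then {ω | ∀ j : Fin s, g j ω = w j} else ∅) := by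
    ext ω
    simp only [mem_preimage, Set.mem_iUnion]
    constructor
    · intro h
      refine ⟨fun j => g j ω, ?_⟩
      have hin : extw (fun j : Fin s => g j ω) ∈ U :=
        hU (fun k => g k ω) _
          (fun k hk => ((hagree ω (fun j : Fin s => g j ω) (fun j => rfl)) k hk).symm) h
      rw [if_pos hin]
      exact fun j => rfl
    · rintro ⟨w, hw⟩
      by_cases hin : extw w ∈ U
      · rw [if_pos hin] at hw
        exact hU (extw w) _ (hagree ω w hw) hin
      · rw [if_neg hin] at hw; exact absurd hw (Set.notMem_empty ω)
  have hdisj : Pairwise (Function.onFun Disjoint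
      (fun w : Fin s → ι => (if extw w ∈ U then {ω | ∀ j : Fin s, g j ω = w j} else ∅))) := by
    intro w w' hww'
    simp only [Function.onFun]
    by_cases h1 : extw w ∈ U
    · by_cases h2 : extw w' ∈ U
      · rw [if_pos h1, if_pos h2]
        refine Set.disjoint_left.2 (fun ω hω hω' => hww' ?_)
        funext j; rw [← hω j, ← hω' j]
      · rw [if_neg h2]; exact disjoint_bot_right
    · rw [if_neg h1]; exact disjoint_bot_left
  have hmeas : ∀ w : Fin s → ι, MeasurableSet
      (if extw w ∈ U then {ω | ∀ j : Fin s, g j ω = w j} else ∅) := by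
    intro w
    by_cases hin : extw w ∈ U
    · rw [if_pos hin]
      have : {ω | ∀ j : Fin s, g j ω = w j} = ⋂ j : Fin s, g (j : ℕ) ⁻¹' {w j} := by
        ext ω; simp [Set.mem_iInter]
      rw [this]
      exact MeasurableSet.iInter (fun j => (hgmeas j) (measurableSet_singleton _))
    · rw [if_neg hin]; exact MeasurableSet.empty
  rw [hdecomp, measure_iUnion hdisj hmeas, tsum_fintype]
  refine Finset.sum_congr rfl (fun w _ => ?_)
  by_cases hin : extw w ∈ U
  · rw [if_pos hin, Set.indicator_of_mem hin, cylP hgmeas hindep hlaw]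
  · rw [if_neg hin, Set.indicator_of_notMem hin, measure_empty]


lemma measurable_XX (f : ι → ℝ → ℝ) (hfm : ∀ i, Measurable (f i)) (x : ℝ) :
    ∀ n, Measurable (XX f x n) := by
  intro n
  induction n with
  | zero => exact measurable_const
  | succ n ih =>
    have h2 : Measurable fun p : ℝ × ι => f p.2 p.1 :=
      measurable_from_prod_countable_left (fun i => hfm i)
    have : (XX f x (n+1)) = (fun p : ℝ × ι => f p.2 p.1) ∘
        (fun u => (XX f x n u, u n)) := by
      funext u; rfl
    rw [this]
    exact h2.comp (ih.prodMk (measurable_pi_apply n))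

lemma meas_finset (m : Measure ι) (T : Finset ι) : m ↑T = ∑ i ∈ T, m {i} := by
  have : (↑T : Set ι) = ⋃ i ∈ T, ({i} : Set ι) := by
    ext j; simp
  rw [this, measure_biUnion_finset ?_ (fun i _ => measurableSet_singleton i)]
  intro i _ j _ hij
  exact Set.disjoint_singleton.2 hij

noncomputable def Sfin (μ : Measure ι) : Finset ι :=
  Finset.univ.filter (fun i => μ {i} ≠ 0)

lemma Sfin_nonempty (μ : Measure ι) [IsProbabilityMeasure μ] : (Sfin μ).Nonempty := by
  by_contra h
  rw [Finset.not_nonempty_iff_eq_empty] at h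
  have h1 : μ univ = 1 := measure_univ
  have : μ (univ : Set ι) = 0 := by
    rw [← Finset.coe_univ, meas_finset]
    refine Finset.sum_eq_zero (fun i _ => ?_)
    by_contra hi
    have : i ∈ Sfin μ := Finset.mem_filter.2 ⟨Finset.mem_univ i, hi⟩
    rw [h] at this
    exact absurd this (Finset.notMem_empty i)
  rw [this] at h1; exact zero_ne_one h1

noncomputable def Gmin (f : ι → ℝ → ℝ) (μ : Measure ι) [IsProbabilityMeasure μ] : ℝ → ℝ :=
  fun y => (Sfin μ).inf' (Sfin_nonempty μ) fun i => f i y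

lemma Gmin_lt_self (f : ι → ℝ → ℝ) (μ : Measure ι) [IsProbabilityMeasure μ]
    (y : ℝ) (hy : 0 < μ {i | f i y < y}) : Gmin f μ y < y := by
  have : ∃ i ∈ Sfin μ, f i y < y := by
    by_contra h
    push_neg at h
    have hsub : μ {i | f i y < y} = 0 := by
      have : {i | f i y < y} = ↑((Finset.univ.filter (fun i => f i y < y)) : Finset ι) := by
        ext i; simp
      rw [this, meas_finset]
      refine Finset.sum_eq_zero (fun i hi => ?_)
      rw [Finset.mem_filter] at hi
      by_contra hne
      exact absurd (h i (Finset.mem_filter.2 ⟨Finset.mem_univ i, hne⟩)) (not_le.2 hi.2)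
    rw [hsub] at hy; exact lt_irrefl 0 hy
  obtain ⟨i, hiS, hi⟩ := this
  exact lt_of_le_of_lt (Finset.inf'_le _ hiS) hi

lemma Gmin_mono (f : ι → ℝ → ℝ) (μ : Measure ι) [IsProbabilityMeasure μ]
    (hmono : ∀ i, Monotone (f i)) : Monotone (Gmin f μ) := by
  intro y z hyz
  refine Finset.le_inf' _ _ (fun i hi => ?_)
  exact le_trans (Finset.inf'_le _ hi) (hmono i hyz)

lemma Gmin_continuous (f : ι → ℝ → ℝ) (μ : Measure ι) [IsProbabilityMeasure μ]
    (hc : ∀ i, Continuous (f i)) : Continuous (Gmin f μ) := by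
  rw [continuous_iff_continuousAt]
  intro y
  exact ContinuousAt.finset_inf'_apply _ (fun i _ => (hc i).continuousAt)

/-- the minimal probability of an atom in the support -/
noncomputable def pmin (μ : Measure ι) [IsProbabilityMeasure μ] : ℝ≥0∞ :=
  (Sfin μ).inf' (Sfin_nonempty μ) fun i => μ {i}

lemma pmin_pos (μ : Measure ι) [IsProbabilityMeasure μ] : 0 < pmin μ := by
  obtain ⟨i, hiS, hi⟩ := Finset.exists_mem_eq_inf' (Sfin_nonempty μ) (fun i => μ {i})
  rw [pmin, hi]
  have := (Finset.mem_filter.1 hiS).2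
  exact pos_iff_ne_zero.2 this

/-- the set of greedy-minimizing letters -/
noncomputable def Afin (f : ι → ℝ → ℝ) (μ : Measure ι) [IsProbabilityMeasure μ] (y : ℝ) :
    Finset ι := Finset.univ.filter (fun i => f i y = Gmin f μ y)

lemma pmin_le_Afin (f : ι → ℝ → ℝ) (μ : Measure ι) [IsProbabilityMeasure μ] (y : ℝ) :
    pmin μ ≤ μ ↑(Afin f μ y) := by
  obtain ⟨i, hiS, hi⟩ := Finset.exists_mem_eq_inf' (Sfin_nonempty μ) (fun j => f j y)
  have hiA : i ∈ Afin f μ y := Finset.mem_filter.2 ⟨Finset.mem_univ i, hi.symm⟩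
  calc pmin μ ≤ μ {i} := Finset.inf'_le _ hiS
    _ ≤ μ ↑(Afin f μ y) := measure_mono (by simpa using hiA)

/-- iterates of a continuous monotone strictly-decreasing-at-every-point map go below any level -/
lemma iterate_unbounded (G : ℝ → ℝ) (hc : Continuous G) (hlt : ∀ y, G y < y)
    (hmono : Monotone G) (b c : ℝ) : ∃ N, G^[N] b < c := by
  by_cases hbc : b < c
  · exact ⟨0, hbc⟩
  push_neg at hbc
  have hdec : ∀ k, G^[k+1] b < G^[k] b := by
    intro k
    rw [Function.iterate_succ_apply']
    exact hlt _
  have hle : ∀ k, G^[k] b ≤ b := by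
    intro k
    induction k with
    | zero => rfl
    | succ k ih => exact le_trans (le_of_lt (hdec k)) ih
  obtain ⟨y₀, hy₀mem, hy₀min⟩ := IsCompact.exists_isMinOn (isCompact_Icc (a := c) (b := b))
    (Set.nonempty_Icc.2 hbc) (Continuous.continuousOn (by continuity : Continuous fun y => y - G y))
  set δ := y₀ - G y₀ with hδ
  have hδpos : 0 < δ := sub_pos.2 (hlt y₀)
  have key : ∀ k : ℕ, G^[k] b < c ∨ G^[k] b ≤ b - k * δ := by
    intro k
    induction k with
    | zero => right; simp
    | succ k ih =>
      rcases ih with h | h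
      · left; exact lt_trans (hdec k) h
      by_cases hck : G^[k] b < c
      · left; exact lt_trans (hdec k) hck
      · right
        push_neg at hck
        have hmem : G^[k] b ∈ Set.Icc c b := ⟨hck, hle k⟩
        have := hy₀min hmem
        simp only [Set.mem_setOf_eq] at this
        have h2 : δ ≤ G^[k] b - G (G^[k] b) := this
        rw [Function.iterate_succ_apply']
        push_cast
        nlinarith
  obtain ⟨k, hk⟩ := exists_nat_gt ((b - c) / δ)
  rcases key k with h | h
  · exact ⟨k, h⟩
  · refine ⟨k, lt_of_le_of_lt h ?_⟩
    rw [div_lt_iff₀ hδpos] at hk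
    linarith


lemma extw_snoc_lt [Nonempty ι] {n : ℕ} (v : Fin n → ι) (i : ι) {m : ℕ} (hm : m < n) :
    extw (Fin.snoc v i) m = extw v m := by
  rw [extw_lt _ (Nat.lt_succ_of_lt hm), extw_lt _ hm]
  have : (⟨m, Nat.lt_succ_of_lt hm⟩ : Fin (n+1)) = Fin.castSucc ⟨m, hm⟩ := rfl
  rw [this, Fin.snoc_castSucc]

lemma extw_snoc_self [Nonempty ι] {n : ℕ} (v : Fin n → ι) (i : ι) :
    extw (Fin.snoc v i) n = i := by
  rw [extw_lt _ (Nat.lt_succ_self n)]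
  have : (⟨n, Nat.lt_succ_self n⟩ : Fin (n+1)) = Fin.last n := rfl
  rw [this, Fin.snoc_last]

lemma XX_extw_snoc [Nonempty ι] (f : ι → ℝ → ℝ) (x : ℝ) {n : ℕ} (v : Fin n → ι) (i : ι)
    {k : ℕ} (hk : k ≤ n) : XX f x k (extw (Fin.snoc v i)) = XX f x k (extw v) :=
  XX_det f x k _ _ (fun m hm => extw_snoc_lt v i (lt_of_lt_of_le hm hk))

lemma XX_extw_snoc_succ [Nonempty ι] (f : ι → ℝ → ℝ) (x : ℝ) {n : ℕ} (v : Fin n → ι) (i : ι) :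
    XX f x (n+1) (extw (Fin.snoc v i)) = f i (XX f x n (extw v)) := by
  show f (extw (Fin.snoc v i) n) (XX f x n (extw (Fin.snoc v i))) = _
  rw [extw_snoc_self, XX_extw_snoc f x v i (le_refl n)]

lemma sum_snoc_eq (G : (Fin (n+1) → ι) → ℝ≥0∞) :
    ∑ w : Fin (n+1) → ι, G w = ∑ v : Fin n → ι, ∑ i : ι, G (Fin.snoc v i) := by
  rw [← Equiv.sum_comp (Fin.snocEquiv (fun _ => ι)) G, Fintype.sum_prod_type, Finset.sum_comm]
  rfl

lemma prod_snoc_eq (v : Fin n → ι) (i : ι) :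
    (∏ j : Fin (n+1), μ {(Fin.snoc v i : Fin (n+1) → ι) j}) = (∏ j : Fin n, μ {v j}) * μ {i} := by
  rw [Fin.prod_univ_castSucc]
  simp [Fin.snoc_castSucc, Fin.snoc_last]

lemma sum_atoms_one : ∑ i : ι, μ {i} = 1 := by
  rw [← meas_finset μ Finset.univ, Finset.coe_univ]
  exact measure_univ

/-- Part (I): the hitting estimate from the killed harmonic identity. -/
lemma hitting_bound [Nonempty ι] (hgmeas : ∀ n, Measurable (g n))
    (hindep : iIndepFun g P)
    (hlaw : ∀ n, Measure.map (g n) P = μ)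
    (f : ι → ℝ → ℝ) (hfm : ∀ i, Measurable (f i))
    (h : ℝ → ℝ≥0∞) (hanti : Antitone h)
    (hharm : ∀ y, ∑ i, μ {i} * h (f i y) = h y)
    (x c : ℝ) (hcx : c < x) :
    h c * P ((fun ω k => g k ω) ⁻¹' {u | ∃ n, XX f x n u ≤ c}) ≤ h x := by
  set dead : ℕ → Set (ℕ → ι) := fun n => {u | ∃ k ≤ n, XX f x k u ≤ c} with hdead
  have hdet : ∀ n (u v : ℕ → ι), (∀ k < n, u k = v k) → u ∈ dead n → v ∈ dead n := by
    rintro n u v hagree ⟨k, hk, hle⟩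
    exact ⟨k, hk, by rw [← XX_det f x k u v (fun m hm => hagree m (lt_of_lt_of_le hm hk))]; exact hle⟩
  have key : ∀ n, (∑ w : Fin n → ι,
      (if ∀ k ≤ n, c < XX f x k (extw w) then (∏ j, μ {w j}) * h (XX f x n (extw w)) else 0))
      + h c * P ((fun ω k => g k ω) ⁻¹' dead n) ≤ h x := by
    intro n
    induction n with
    | zero =>
      have hd0 : dead 0 = ∅ := by
        ext u
        simp only [hdead, mem_setOf_eq, Set.mem_empty_iff_false, iff_false, not_exists]
        intro k
        rintro ⟨hk, hle⟩
        interval_cases k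
        exact absurd hle (not_le.2 hcx)
      rw [hd0]
      simp only [Set.preimage_empty, measure_empty, mul_zero, add_zero]
      rw [Fintype.sum_unique]
      have hcond : ∀ k ≤ 0, c < XX f x k (extw (default : Fin 0 → ι)) := by
        intro k hk
        interval_cases k
        exact hcx
      rw [if_pos hcond]
      show (∏ j : Fin 0, μ {(default : Fin 0 → ι) j}) * h x ≤ h x
      rw [Finset.univ_eq_empty, Finset.prod_empty, one_mul]
    | succ n ih =>
      refine le_trans ?_ ih
      have hTn := transfer (P := P) hgmeas hindep hlaw n (dead n) (hdet n)
      have hTn1 := transfer (P := P) hgmeas hindep hlaw (n+1) (dead (n+1)) (hdet (n+1))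
      rw [hTn, hTn1, Finset.mul_sum, Finset.mul_sum, ← Finset.sum_add_distrib,
        ← Finset.sum_add_distrib, sum_snoc_eq]
      refine Finset.sum_le_sum (fun v _ => ?_)
      set y := XX f x n (extw v) with hy
      set pv := ∏ j : Fin n, μ {v j} with hpv
      by_cases hv : extw v ∈ dead n
      · -- dead case
        have halive : ¬ (∀ k ≤ n, c < XX f x k (extw v)) := by
          obtain ⟨k, hk, hle⟩ := hv
          push_neg
          exact ⟨k, hk, hle⟩
        rw [if_neg halive, Set.indicator_of_mem hv, zero_add]
        have hterm : ∀ i : ι, ((if ∀ k ≤ n+1, c < XX f x k (extw (Fin.snoc v i)) then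
            (∏ j : Fin (n+1), μ {(Fin.snoc v i : Fin (n+1) → ι) j}) * h (XX f x (n+1) (extw (Fin.snoc v i))) else 0)
            + h c * (dead (n+1)).indicator (fun _ => ∏ j : Fin (n+1), μ {(Fin.snoc v i : Fin (n+1) → ι) j}) (extw (Fin.snoc v i)))
            = h c * (pv * μ {i}) := by
          intro i
          have hal : ¬ (∀ k ≤ n+1, c < XX f x k (extw (Fin.snoc v i))) := by
            intro hcon
            refine halive (fun k hk => ?_)
            have := hcon k (le_trans hk (Nat.le_succ n))
            rwa [XX_extw_snoc f x v i hk] at this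
          have hdd : extw (Fin.snoc v i) ∈ dead (n+1) := by
            obtain ⟨k, hk, hle⟩ := hv
            exact ⟨k, le_trans hk (Nat.le_succ n), by rwa [XX_extw_snoc f x v i hk]⟩
          rw [if_neg hal, Set.indicator_of_mem hdd, zero_add, prod_snoc_eq]
        refine le_trans (le_of_eq (Finset.sum_congr rfl (fun i _ => hterm i))) (le_of_eq ?_)
        calc ∑ i : ι, h c * (pv * μ {i}) = h c * pv * ∑ i : ι, μ {i} := by
              rw [Finset.mul_sum]
              exact Finset.sum_congr rfl (fun i _ => by ring)
          _ = h c * pv := by rw [sum_atoms_one, mul_one]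
      · -- alive case
        have halive : ∀ k ≤ n, c < XX f x k (extw v) := by
          by_contra hcon
          push_neg at hcon
          obtain ⟨k, hk, hle⟩ := hcon
          exact hv ⟨k, hk, hle⟩
        rw [if_pos halive, Set.indicator_of_notMem hv, mul_zero, add_zero]
        have hterm : ∀ i : ι, ((if ∀ k ≤ n+1, c < XX f x k (extw (Fin.snoc v i)) then
            (∏ j : Fin (n+1), μ {(Fin.snoc v i : Fin (n+1) → ι) j}) * h (XX f x (n+1) (extw (Fin.snoc v i))) else 0)
            + h c * (dead (n+1)).indicator (fun _ => ∏ j : Fin (n+1), μ {(Fin.snoc v i : Fin (n+1) → ι) j}) (extw (Fin.snoc v i)))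
            ≤ pv * μ {i} * h (f i y) := by
          intro i
          have hcond : (∀ k ≤ n+1, c < XX f x k (extw (Fin.snoc v i))) ↔ c < f i y := by
            constructor
            · intro hcon
              have := hcon (n+1) (le_refl _)
              rwa [XX_extw_snoc_succ] at this
            · intro hlt k hk
              rcases Nat.lt_succ_iff_lt_or_eq.1 (Nat.lt_succ_of_le hk) with h1 | h1
              · rw [XX_extw_snoc f x v i (Nat.lt_succ_iff.1 h1)]
                exact halive k (Nat.lt_succ_iff.1 h1)
              · rw [h1, XX_extw_snoc_succ]
                exact hlt
          have hdd : extw (Fin.snoc v i) ∈ dead (n+1) ↔ f i y ≤ c := by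
            constructor
            · rintro ⟨k, hk, hle⟩
              rcases Nat.lt_succ_iff_lt_or_eq.1 (Nat.lt_succ_of_le hk) with h1 | h1
              · have hk' : k ≤ n := Nat.lt_succ_iff.1 h1
                rw [XX_extw_snoc f x v i hk'] at hle
                exact absurd hle (not_le.2 (halive k hk'))
              · rw [h1, XX_extw_snoc_succ] at hle
                exact hle
            · intro hle
              exact ⟨n+1, le_refl _, by rwa [XX_extw_snoc_succ]⟩
          by_cases hi : c < f i y
          · rw [if_pos (hcond.2 hi),
              Set.indicator_of_notMem (by rw [hdd]; exact not_le.2 hi), mul_zero, add_zero,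
              prod_snoc_eq, XX_extw_snoc_succ]
          · push_neg at hi
            rw [if_neg (fun hcon => absurd (hcond.1 hcon) (not_lt.2 hi)),
              Set.indicator_of_mem (hdd.2 hi), zero_add, prod_snoc_eq]
            calc h c * (pv * μ {i}) ≤ h (f i y) * (pv * μ {i}) :=
                  mul_le_mul_left (hanti hi) _
              _ = pv * μ {i} * h (f i y) := by ring
        refine le_trans (Finset.sum_le_sum (fun i _ => hterm i)) (le_of_eq ?_)
        calc ∑ i : ι, pv * μ {i} * h (f i y)
            = pv * ∑ i : ι, μ {i} * h (f i y) := by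
              rw [Finset.mul_sum]
              exact Finset.sum_congr rfl (fun i _ => by ring)
          _ = pv * h y := by rw [hharm]
  -- conclude by continuity of measure
  have hmeas : ∀ n, MeasurableSet ((fun ω (k : ℕ) => g k ω) ⁻¹' dead n) := by
    intro n
    have hgs : Measurable (fun ω (k : ℕ) => g k ω) := measurable_pi_lambda _ hgmeas
    refine hgs ?_
    have : dead n = ⋃ k ∈ Finset.range (n+1), {u : ℕ → ι | XX f x k u ≤ c} := by
      ext u
      simp only [hdead, mem_setOf_eq, Set.mem_iUnion, Finset.mem_range, Nat.lt_succ_iff]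
      tauto
    rw [this]
    exact MeasurableSet.biUnion (Finset.range (n+1)).countable_toSet
      (fun k _ => (measurable_XX f hfm x k) measurableSet_Iic)
  have hmono : Monotone (fun n => (fun ω (k : ℕ) => g k ω) ⁻¹' dead n) := by
    intro a b hab
    refine Set.preimage_mono (fun u hu => ?_)
    obtain ⟨k, hk, hle⟩ := hu
    exact ⟨k, le_trans hk hab, hle⟩
  have hunion : (fun ω (k : ℕ) => g k ω) ⁻¹' {u | ∃ n, XX f x n u ≤ c}
      = ⋃ n, (fun ω (k : ℕ) => g k ω) ⁻¹' dead n := by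
    rw [← Set.preimage_iUnion]
    congr 1
    ext u
    constructor
    · rintro ⟨n, hn⟩
      exact Set.mem_iUnion.2 ⟨n, ⟨n, le_refl n, hn⟩⟩
    · intro hu
      obtain ⟨n, k, _, hk⟩ := Set.mem_iUnion.1 hu
      exact ⟨k, hk⟩
  rw [hunion, Directed.measure_iUnion (hmono.directed_le), ENNReal.mul_iSup]
  refine iSup_le (fun n => ?_)
  exact le_trans (le_add_self) (key n)


/-- greedy one-step lower bound -/
lemma greedy_step [Nonempty ι] (hgmeas : ∀ n, Measurable (g n))
    (hindep : iIndepFun g P)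
    (hlaw : ∀ n, Measure.map (g n) P = μ)
    (f : ι → ℝ → ℝ) (x : ℝ) (s : ℕ) (U : Set (ℕ → ι))
    (hU : ∀ u v, (∀ k < s, u k = v k) → u ∈ U → v ∈ U) :
    pmin μ * P ((fun ω k => g k ω) ⁻¹' U)
      ≤ P ((fun ω k => g k ω) ⁻¹' (U ∩ {u | u s ∈ Afin f μ (XX f x s u)})) := by
  set U' := U ∩ {u | u s ∈ Afin f μ (XX f x s u)} with hU'
  have hdetU' : ∀ u v, (∀ k < s+1, u k = v k) → u ∈ U' → v ∈ U' := by
    rintro u v hagree ⟨hu1, hu2⟩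
    refine ⟨hU u v (fun k hk => hagree k (Nat.lt_succ_of_lt hk)) hu1, ?_⟩
    have h1 : v s = u s := (hagree s (Nat.lt_succ_self s)).symm
    have h2 : XX f x s v = XX f x s u :=
      XX_det f x s v u (fun k hk => (hagree k (Nat.lt_succ_of_lt hk)).symm)
    simp only [mem_setOf_eq, h1, h2]
    exact hu2
  rw [transfer hgmeas hindep hlaw s U hU,
    transfer hgmeas hindep hlaw (s+1) U' hdetU', sum_snoc_eq, Finset.mul_sum]
  refine Finset.sum_le_sum (fun v _ => ?_)
  set y := XX f x s (extw v) with hy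
  by_cases hv : extw v ∈ U
  · rw [Set.indicator_of_mem hv]
    have hmem : ∀ i : ι, extw (Fin.snoc v i) ∈ U' ↔ i ∈ Afin f μ y := by
      intro i
      constructor
      · rintro ⟨_, hi⟩
        simp only [mem_setOf_eq, extw_snoc_self, XX_extw_snoc f x v i (le_refl s)] at hi
        exact hi
      · intro hi
        refine ⟨hU (extw v) _ (fun k hk => (extw_snoc_lt v i hk).symm) hv, ?_⟩
        simp only [mem_setOf_eq, extw_snoc_self, XX_extw_snoc f x v i (le_refl s)]
        exact hi
    have hcalc : ∀ i : ι, U'.indicator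
        (fun _ => ∏ j : Fin (s+1), μ {(Fin.snoc v i : Fin (s+1) → ι) j}) (extw (Fin.snoc v i))
        = (if i ∈ Afin f μ y then (∏ j : Fin s, μ {v j}) * μ {i} else 0) := by
      intro i
      by_cases hi : i ∈ Afin f μ y
      · rw [Set.indicator_of_mem ((hmem i).2 hi), if_pos hi, prod_snoc_eq]
      · rw [Set.indicator_of_notMem (fun hc => hi ((hmem i).1 hc)), if_neg hi]
    rw [Finset.sum_congr rfl (fun i _ => hcalc i)]
    have : ∑ i : ι, (if i ∈ Afin f μ y then (∏ j : Fin s, μ {v j}) * μ {i} else 0)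
        = (∏ j : Fin s, μ {v j}) * ∑ i ∈ Afin f μ y, μ {i} := by
      rw [Finset.mul_sum, ← Finset.sum_filter]
      refine (Finset.sum_congr ?_ (fun i _ => rfl))
      rw [Finset.filter_mem_eq_inter, Finset.univ_inter]
    rw [this, ← meas_finset]
    calc pmin μ * ∏ j : Fin s, μ {v j} = (∏ j : Fin s, μ {v j}) * pmin μ := mul_comm _ _
      _ ≤ (∏ j : Fin s, μ {v j}) * μ ↑(Afin f μ y) :=
          mul_le_mul_right (pmin_le_Afin f μ y) _
  · rw [Set.indicator_of_notMem hv, mul_zero]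
    exact zero_le

/-- greedy window lower bound -/
lemma greedy_window [Nonempty ι] (hgmeas : ∀ n, Measurable (g n))
    (hindep : iIndepFun g P)
    (hlaw : ∀ n, Measure.map (g n) P = μ)
    (f : ι → ℝ → ℝ) (x : ℝ) (s : ℕ) (U : Set (ℕ → ι))
    (hU : ∀ u v, (∀ k < s, u k = v k) → u ∈ U → v ∈ U) (N : ℕ) :
    pmin μ ^ N * P ((fun ω k => g k ω) ⁻¹' U)
      ≤ P ((fun ω k => g k ω) ⁻¹' (U ∩ {u | ∀ r < N, u (s+r) ∈ Afin f μ (XX f x (s+r) u)})) := by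
  induction N with
  | zero =>
    have : U ∩ {u | ∀ r < 0, u (s+r) ∈ Afin f μ (XX f x (s+r) u)} = U := by
      refine Set.inter_eq_left.2 (fun u _ => ?_)
      intro r hr
      exact absurd hr (Nat.not_lt_zero r)
    rw [pow_zero, one_mul, this]
  | succ N ih =>
    set UN := U ∩ {u | ∀ r < N, u (s+r) ∈ Afin f μ (XX f x (s+r) u)} with hUN
    have hdetUN : ∀ u v, (∀ k < s + N, u k = v k) → u ∈ UN → v ∈ UN := by
      rintro u v hagree ⟨hu1, hu2⟩
      constructor
      · refine hU u v (fun k hk => hagree k ?_) hu1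
        omega
      · intro r hr
        have h1 : v (s+r) = u (s+r) := (hagree (s+r) (by omega)).symm
        have h2 : XX f x (s+r) v = XX f x (s+r) u :=
          XX_det f x (s+r) v u (fun k hk => (hagree k (by omega)).symm)
        simp only [mem_setOf_eq, h1, h2]
        exact hu2 r hr
    have hstep := greedy_step hgmeas hindep hlaw f x (s+N) UN hdetUN
    have hsub : UN ∩ {u | u (s+N) ∈ Afin f μ (XX f x (s+N) u)}
        = U ∩ {u | ∀ r < N+1, u (s+r) ∈ Afin f μ (XX f x (s+r) u)} := by
      ext u
      simp only [hUN, Set.mem_inter_iff, mem_setOf_eq]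
      constructor
      · rintro ⟨⟨h1, h2⟩, h3⟩
        refine ⟨h1, fun r hr => ?_⟩
        rcases Nat.lt_succ_iff_lt_or_eq.1 hr with h | h
        · exact h2 r h
        · rw [h]; exact h3
      · rintro ⟨h1, h2⟩
        exact ⟨⟨h1, fun r hr => h2 r (Nat.lt_succ_of_lt hr)⟩, h2 N (Nat.lt_succ_self N)⟩
    calc pmin μ ^ (N+1) * P ((fun ω k => g k ω) ⁻¹' U)
        = pmin μ * (pmin μ ^ N * P ((fun ω k => g k ω) ⁻¹' U)) := by ring
      _ ≤ pmin μ * P ((fun ω k => g k ω) ⁻¹' UN) := mul_le_mul_right ih _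
      _ ≤ P ((fun ω k => g k ω) ⁻¹' (UN ∩ {u | u (s+N) ∈ Afin f μ (XX f x (s+N) u)})) := hstep
      _ = _ := by rw [hsub]


/-- the greedy-success window set -/
def SuccS (f : ι → ℝ → ℝ) (μ : Measure ι) [IsProbabilityMeasure μ] (x : ℝ) (N s : ℕ) :
    Set (ℕ → ι) := {u | ∀ r < N, u (s+r) ∈ Afin f μ (XX f x (s+r) u)}

lemma succ_det (f : ι → ℝ → ℝ) (μ : Measure ι) [IsProbabilityMeasure μ] (x : ℝ) (N s : ℕ)
    (u v : ℕ → ι) (hagree : ∀ k < s + N, u k = v k) (hu : u ∈ SuccS f μ x N s) :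
    v ∈ SuccS f μ x N s := by
  intro r hr
  have h1 : v (s+r) = u (s+r) := (hagree (s+r) (by omega)).symm
  have h2 : XX f x (s+r) v = XX f x (s+r) u :=
    XX_det f x (s+r) v u (fun k hk => (hagree k (by omega)).symm)
  rw [h1, h2]
  exact hu r hr

lemma succ_meas (f : ι → ℝ → ℝ) (hfm : ∀ i, Measurable (f i))
    (hGm : Measurable (Gmin f μ)) (x : ℝ) (N s : ℕ) :
    MeasurableSet (SuccS f μ x N s) := by
  have : SuccS f μ x N s = ⋂ (r : ℕ), ⋂ (_ : r < N),
      {u : ℕ → ι | f (u (s+r)) (XX f x (s+r) u) = Gmin f μ (XX f x (s+r) u)} := by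
    ext u
    simp only [SuccS, mem_setOf_eq, Set.mem_iInter]
    constructor
    · intro h r hr
      exact (Finset.mem_filter.1 (h r hr)).2
    · intro h r hr
      exact Finset.mem_filter.2 ⟨Finset.mem_univ _, h r hr⟩
  rw [this]
  refine MeasurableSet.iInter (fun r => MeasurableSet.iInter (fun _ => ?_))
  have hφ : Measurable fun u : ℕ → ι => f (u (s+r)) (XX f x (s+r) u) := by
    have h2 : Measurable fun p : ℝ × ι => f p.2 p.1 :=
      measurable_from_prod_countable_left (fun i => hfm i)
    exact h2.comp ((measurable_XX f hfm x (s+r)).prodMk (measurable_pi_apply (s+r)))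
  exact measurableSet_eq_fun hφ (hGm.comp (measurable_XX f hfm x (s+r)))

/-- failure bound: conditionally on any determined event, the greedy window succeeds
with probability at least `pmin ^ N` -/
lemma fail_bound [Nonempty ι] (hgmeas : ∀ n, Measurable (g n))
    (hindep : iIndepFun g P)
    (hlaw : ∀ n, Measure.map (g n) P = μ)
    (f : ι → ℝ → ℝ) (hfm : ∀ i, Measurable (f i)) (hGm : Measurable (Gmin f μ))
    (x : ℝ) (s : ℕ) (N : ℕ) (U : Set (ℕ → ι))
    (hU : ∀ u v, (∀ k < s, u k = v k) → u ∈ U → v ∈ U) :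
    P ((fun ω k => g k ω) ⁻¹' (U ∩ (SuccS f μ x N s)ᶜ)) + pmin μ ^ N * P ((fun ω k => g k ω) ⁻¹' U)
      ≤ P ((fun ω k => g k ω) ⁻¹' U) := by
  set pre := fun (V : Set (ℕ → ι)) => (fun ω (k : ℕ) => g k ω) ⁻¹' V with hpre
  have hsplit : P (pre U ∩ pre (SuccS f μ x N s)) + P (pre U \ pre (SuccS f μ x N s)) = P (pre U) :=
    measure_inter_add_diff (pre U) ((measurable_pi_lambda _ hgmeas) (succ_meas f hfm hGm x N s))
  have h1 : pre (U ∩ (SuccS f μ x N s)ᶜ) = pre U \ pre (SuccS f μ x N s) := by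
    rw [Set.diff_eq, ← Set.preimage_compl, ← Set.preimage_inter]
  have h2 : pre (U ∩ SuccS f μ x N s) = pre U ∩ pre (SuccS f μ x N s) := Set.preimage_inter
  calc P (pre (U ∩ (SuccS f μ x N s)ᶜ)) + pmin μ ^ N * P (pre U)
      ≤ P (pre (U ∩ (SuccS f μ x N s)ᶜ)) + P (pre (U ∩ SuccS f μ x N s)) := by
        refine add_le_add_right ?_ _
        exact greedy_window hgmeas hindep hlaw f x s U hU N
    _ = P (pre U \ pre (SuccS f μ x N s)) + P (pre U ∩ pre (SuccS f μ x N s)) := by rw [h1, h2]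
    _ = P (pre U) := by rw [add_comm]; exact hsplit


/-- the K-th marked visit time set -/
def MkS (f : ι → ℝ → ℝ) (x M : ℝ) (N : ℕ) : ℕ → ℕ → Set (ℕ → ι)
  | 0, t => {u | XX f x t u ≤ M} ∩ ⋂ (s : ℕ), ⋂ (_ : s < t), {u | XX f x s u ≤ M}ᶜ
  | K+1, t => ⋃ (t' : ℕ), ⋃ (_ : t' + N ≤ t), (MkS f x M N K t' ∩ {u | XX f x t u ≤ M} ∩
      ⋂ (s : ℕ), ⋂ (_ : t' + N ≤ s ∧ s < t), {u | XX f x s u ≤ M}ᶜ)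

lemma mkS_zero_iff (f : ι → ℝ → ℝ) (x M : ℝ) (N : ℕ) (t : ℕ) (u : ℕ → ι) :
    u ∈ MkS f x M N 0 t ↔ XX f x t u ≤ M ∧ ∀ s < t, ¬ (XX f x s u ≤ M) := by
  simp [MkS, Set.mem_iInter]

lemma mkS_succ_iff (f : ι → ℝ → ℝ) (x M : ℝ) (N : ℕ) (K t : ℕ) (u : ℕ → ι) :
    u ∈ MkS f x M N (K+1) t ↔ ∃ t', t' + N ≤ t ∧ u ∈ MkS f x M N K t' ∧ XX f x t u ≤ M ∧
      ∀ s, t' + N ≤ s → s < t → ¬ (XX f x s u ≤ M) := by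
  simp only [MkS, Set.mem_iUnion, Set.mem_inter_iff, Set.mem_iInter, mem_setOf_eq,
    Set.mem_compl_iff, and_imp]
  tauto

lemma mkS_visit (f : ι → ℝ → ℝ) (x M : ℝ) (N : ℕ) (K t : ℕ) (u : ℕ → ι)
    (hu : u ∈ MkS f x M N K t) : XX f x t u ≤ M := by
  cases K with
  | zero => exact ((mkS_zero_iff f x M N t u).1 hu).1
  | succ K =>
    obtain ⟨t', _, _, hv, _⟩ := (mkS_succ_iff f x M N K t u).1 hu
    exact hv

lemma mkS_meas (f : ι → ℝ → ℝ) (hfm : ∀ i, Measurable (f i)) (x M : ℝ) (N : ℕ) (K t : ℕ) :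
    MeasurableSet (MkS f x M N K t) := by
  induction K generalizing t with
  | zero =>
    refine MeasurableSet.inter ((measurable_XX f hfm x t) measurableSet_Iic) ?_
    exact MeasurableSet.iInter (fun s => MeasurableSet.iInter
      (fun _ => ((measurable_XX f hfm x s) measurableSet_Iic).compl))
  | succ K ih =>
    refine MeasurableSet.iUnion (fun t' => MeasurableSet.iUnion (fun _ => ?_))
    refine MeasurableSet.inter (MeasurableSet.inter (ih t')
      ((measurable_XX f hfm x t) measurableSet_Iic)) ?_
    exact MeasurableSet.iInter (fun s => MeasurableSet.iInter
      (fun _ => ((measurable_XX f hfm x s) measurableSet_Iic).compl))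

lemma mkS_unique (f : ι → ℝ → ℝ) (x M : ℝ) (N : ℕ) (K : ℕ) (u : ℕ → ι) :
    ∀ t t', u ∈ MkS f x M N K t → u ∈ MkS f x M N K t' → t = t' := by
  induction K with
  | zero =>
    intro t t' ht ht'
    rw [mkS_zero_iff] at ht ht'
    by_contra hne
    rcases Nat.lt_or_ge t t' with h | h
    · exact ht'.2 t h ht.1
    · exact ht.2 t' (lt_of_le_of_ne h (Ne.symm hne)) ht'.1
  | succ K ih =>
    intro t t' ht ht'
    obtain ⟨s, hs, hmem, hv, hmin⟩ := (mkS_succ_iff f x M N K t u).1 ht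
    obtain ⟨s', hs', hmem', hv', hmin'⟩ := (mkS_succ_iff f x M N K t' u).1 ht'
    have hss : s = s' := ih s s' hmem hmem'
    subst hss
    by_contra hne
    rcases Nat.lt_or_ge t t' with h | h
    · exact hmin' t hs h hv
    · exact hmin t' hs' (lt_of_le_of_ne h (Ne.symm hne)) hv'

lemma mkS_gap_lt (f : ι → ℝ → ℝ) (x M : ℝ) (N : ℕ) :
    ∀ K j t s (u : ℕ → ι), j < K → u ∈ MkS f x M N K t → u ∈ MkS f x M N j s → s + N ≤ t := by
  intro K
  induction K with
  | zero => intro j t s u hj; exact absurd hj (Nat.not_lt_zero j)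
  | succ K ih =>
    intro j t s u hj ht hs
    obtain ⟨t', ht', hmem, _, _⟩ := (mkS_succ_iff f x M N K t u).1 ht
    rcases Nat.lt_succ_iff_lt_or_eq.1 hj with h | h
    · have := ih j t' s u h hmem hs
      omega
    · subst h
      have : s = t' := mkS_unique f x M N j u s t' hs hmem
      omega

lemma mkS_le (f : ι → ℝ → ℝ) (x M : ℝ) (N : ℕ) (K j t s : ℕ) (u : ℕ → ι)
    (hj : j ≤ K) (ht : u ∈ MkS f x M N K t) (hs : u ∈ MkS f x M N j s) : s ≤ t := by
  rcases Nat.lt_or_ge j K with h | h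
  · have := mkS_gap_lt f x M N K j t s u h ht hs
    omega
  · have : j = K := le_antisymm hj h
    subst this
    exact le_of_eq (mkS_unique f x M N j u s t hs ht)

lemma mkS_det (f : ι → ℝ → ℝ) (x M : ℝ) (N : ℕ) :
    ∀ K t (u v : ℕ → ι), (∀ k < t, u k = v k) → u ∈ MkS f x M N K t → v ∈ MkS f x M N K t := by
  intro K
  induction K with
  | zero =>
    intro t u v hagree hu
    rw [mkS_zero_iff] at hu ⊢
    refine ⟨by rw [← XX_det f x t u v hagree]; exact hu.1, fun s hst hc => ?_⟩
    refine hu.2 s hst ?_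
    rw [XX_det f x s u v (fun k hk => hagree k (lt_trans hk hst))]
    exact hc
  | succ K ih =>
    intro t u v hagree hu
    rw [mkS_succ_iff] at hu ⊢
    obtain ⟨t', ht', hmem, hv, hmin⟩ := hu
    refine ⟨t', ht', ih t' u v (fun k hk => hagree k (by omega)) hmem,
      by rw [← XX_det f x t u v hagree]; exact hv, fun s hs1 hs2 hc => ?_⟩
    refine hmin s hs1 hs2 ?_
    rw [XX_det f x s u v (fun k hk => hagree k (lt_trans hk hs2))]
    exact hc

lemma mkS_exists (f : ι → ℝ → ℝ) (x M : ℝ) (N : ℕ) (u : ℕ → ι)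
    (hB : ∀ m : ℕ, ∃ n, m ≤ n ∧ XX f x n u ≤ M) (K : ℕ) :
    ∃ t, u ∈ MkS f x M N K t := by
  induction K with
  | zero =>
    have hex : ∃ t, XX f x t u ≤ M := by
      obtain ⟨n, _, hn⟩ := hB 0
      exact ⟨n, hn⟩
    refine ⟨Nat.find hex, (mkS_zero_iff f x M N _ u).2 ⟨Nat.find_spec hex, ?_⟩⟩
    exact fun s hs => Nat.find_min hex hs
  | succ K ih =>
    obtain ⟨t', ht'⟩ := ih
    have hex : ∃ t, t' + N ≤ t ∧ XX f x t u ≤ M := by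
      obtain ⟨n, hn1, hn2⟩ := hB (t' + N)
      exact ⟨n, hn1, hn2⟩
    refine ⟨Nat.find hex, (mkS_succ_iff f x M N K _ u).2
      ⟨t', (Nat.find_spec hex).1, ht', (Nat.find_spec hex).2, fun s hs1 hs2 hc => ?_⟩⟩
    exact Nat.find_min hex hs2 ⟨hs1, hc⟩

/-- the bad set: K marked visits, all of whose greedy windows fail -/
def RS (f : ι → ℝ → ℝ) (μ : Measure ι) [IsProbabilityMeasure μ] (x M : ℝ) (N : ℕ) (K t : ℕ) :
    Set (ℕ → ι) :=
  MkS f x M N K t ∩ ⋂ (j : ℕ), ⋂ (_ : j < K), ⋂ (s : ℕ),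
    ((MkS f x M N j s)ᶜ ∪ (SuccS f μ x N s)ᶜ)

lemma rS_iff (f : ι → ℝ → ℝ) (μ : Measure ι) [IsProbabilityMeasure μ] (x M : ℝ) (N K t : ℕ)
    (u : ℕ → ι) : u ∈ RS f μ x M N K t ↔ u ∈ MkS f x M N K t ∧
      ∀ j < K, ∀ s, u ∈ MkS f x M N j s → u ∉ SuccS f μ x N s := by
  simp only [RS, Set.mem_inter_iff, Set.mem_iInter, Set.mem_union, Set.mem_compl_iff]
  constructor
  · rintro ⟨h1, h2⟩
    exact ⟨h1, fun j hj s hms hsc => (h2 j hj s).elim (fun h => h hms) (fun h => h hsc)⟩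
  · rintro ⟨h1, h2⟩
    refine ⟨h1, fun j hj s => ?_⟩
    by_cases hms : u ∈ MkS f x M N j s
    · exact Or.inr (h2 j hj s hms)
    · exact Or.inl hms

lemma rS_meas (f : ι → ℝ → ℝ) (μ : Measure ι) [IsProbabilityMeasure μ]
    (hfm : ∀ i, Measurable (f i)) (hGm : Measurable (Gmin f μ)) (x M : ℝ) (N K t : ℕ) :
    MeasurableSet (RS f μ x M N K t) := by
  refine (mkS_meas f hfm x M N K t).inter ?_
  refine MeasurableSet.iInter (fun j => MeasurableSet.iInter (fun _ =>
    MeasurableSet.iInter (fun s => ?_)))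
  exact ((mkS_meas f hfm x M N j s).compl).union ((succ_meas f hfm hGm x N s).compl)

lemma rS_det (f : ι → ℝ → ℝ) (μ : Measure ι) [IsProbabilityMeasure μ] (x M : ℝ) (N K t : ℕ)
    (u v : ℕ → ι) (hagree : ∀ k < t, u k = v k) (hu : u ∈ RS f μ x M N K t) :
    v ∈ RS f μ x M N K t := by
  rw [rS_iff] at hu ⊢
  obtain ⟨hmk, hwin⟩ := hu
  have hmkv : v ∈ MkS f x M N K t := mkS_det f x M N K t u v hagree hmk
  refine ⟨hmkv, fun j hj s hmem hsucc => ?_⟩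
  -- transfer back to u
  have hsN : s + N ≤ t := mkS_gap_lt f x M N K j t s v hj hmkv hmem
  have hagree' : ∀ k < s, v k = u k := fun k hk => (hagree k (by omega)).symm
  have hmemu : u ∈ MkS f x M N j s := mkS_det f x M N j s v u hagree' hmem
  refine hwin j hj s hmemu ?_
  exact succ_det f μ x N s v u (fun k hk => (hagree k (by omega)).symm) hsucc

lemma rS_disj (f : ι → ℝ → ℝ) (μ : Measure ι) [IsProbabilityMeasure μ] (x M : ℝ) (N K : ℕ)
    {t t' : ℕ} (h : t ≠ t') : Disjoint (RS f μ x M N K t) (RS f μ x M N K t') := by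
  refine Set.disjoint_left.2 (fun u hu hu' => h ?_)
  exact mkS_unique f x M N K u t t' ((rS_iff f μ x M N K t u).1 hu).1
    ((rS_iff f μ x M N K t' u).1 hu').1

/-- the "first visit at `t` after `t' + N`" set -/
def DD (f : ι → ℝ → ℝ) (x M : ℝ) (N t' t : ℕ) : Set (ℕ → ι) :=
  {u | t' + N ≤ t ∧ XX f x t u ≤ M ∧ ∀ s, t' + N ≤ s → s < t → ¬ (XX f x s u ≤ M)}

lemma dd_meas (f : ι → ℝ → ℝ) (hfm : ∀ i, Measurable (f i)) (x M : ℝ) (N t' t : ℕ) :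
    MeasurableSet (DD f x M N t' t) := by
  by_cases h : t' + N ≤ t
  · have : DD f x M N t' t = {u : ℕ → ι | XX f x t u ≤ M} ∩
        (⋂ (s : ℕ), ⋂ (_ : t' + N ≤ s ∧ s < t), {u : ℕ → ι | XX f x s u ≤ M}ᶜ) := by
      ext u
      simp only [DD, mem_setOf_eq, Set.mem_inter_iff, Set.mem_iInter, Set.mem_compl_iff, and_imp]
      tauto
    rw [this]
    refine MeasurableSet.inter ((measurable_XX f hfm x t) measurableSet_Iic) ?_
    exact MeasurableSet.iInter (fun s => MeasurableSet.iInter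
      (fun _ => ((measurable_XX f hfm x s) measurableSet_Iic).compl))
  · have : DD f x M N t' t = ∅ := by
      ext u
      simp only [DD, mem_setOf_eq, Set.mem_empty_iff_false, iff_false]
      tauto
    rw [this]
    exact MeasurableSet.empty

lemma dd_disj (f : ι → ℝ → ℝ) (x M : ℝ) (N t' : ℕ) {t t₂ : ℕ} (h : t ≠ t₂) :
    Disjoint (DD f x M N t' t) (DD f x M N t' t₂) := by
  refine Set.disjoint_left.2 (fun u hu hu' => h ?_)
  obtain ⟨h1, h2, h3⟩ := hu
  obtain ⟨h1', h2', h3'⟩ := hu'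
  by_contra hne
  rcases Nat.lt_or_ge t t₂ with hlt | hge
  · exact h3' t h1 hlt h2
  · exact h3 t₂ h1' (lt_of_le_of_ne hge (Ne.symm hne)) h2'

lemma rS_succ_subset (f : ι → ℝ → ℝ) (μ : Measure ι) [IsProbabilityMeasure μ] (x M : ℝ)
    (N K t : ℕ) : RS f μ x M N (K+1) t ⊆
      ⋃ (t' : ℕ), (RS f μ x M N K t' ∩ (SuccS f μ x N t')ᶜ ∩ DD f x M N t' t) := by
  intro u hu
  rw [rS_iff] at hu
  obtain ⟨hmk, hwin⟩ := hu
  obtain ⟨t', ht', hmem, hv, hmin⟩ := (mkS_succ_iff f x M N K t u).1 hmk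
  refine Set.mem_iUnion.2 ⟨t', ?_⟩
  refine ⟨⟨(rS_iff f μ x M N K t' u).2 ⟨hmem, fun j hj s hms => hwin j (Nat.lt_succ_of_lt hj) s hms⟩, ?_⟩,
    ht', hv, hmin⟩
  exact hwin K (Nat.lt_succ_self K) t' hmem


lemma succ_traj (f : ι → ℝ → ℝ) (μ : Measure ι) [IsProbabilityMeasure μ] (x : ℝ) (N s : ℕ)
    (u : ℕ → ι) (hu : u ∈ SuccS f μ x N s) :
    ∀ r ≤ N, XX f x (s+r) u = (Gmin f μ)^[r] (XX f x s u) := by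
  intro r
  induction r with
  | zero => intro _; rfl
  | succ r ih =>
    intro hr
    have h1 : XX f x (s+(r+1)) u = f (u (s+r)) (XX f x (s+r) u) := rfl
    have h2 := hu r (by omega)
    have h3 : f (u (s+r)) (XX f x (s+r) u) = Gmin f μ (XX f x (s+r) u) :=
      (Finset.mem_filter.1 h2).2
    rw [h1, h3, ih (by omega), ← Function.iterate_succ_apply' (Gmin f μ)]

lemma escape (f : ι → ℝ → ℝ) (μ : Measure ι) [IsProbabilityMeasure μ] (x M c : ℝ) (N : ℕ)
    (hGmono : Monotone (Gmin f μ)) (hGN : (Gmin f μ)^[N] M < c) (K : ℕ) :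
    {u : ℕ → ι | ∀ m : ℕ, ∃ n, m ≤ n ∧ XX f x n u ≤ M} \ {u | ∃ n, XX f x n u ≤ c}
      ⊆ ⋃ t, RS f μ x M N K t := by
  intro u hu
  obtain ⟨hB, hH⟩ := hu
  obtain ⟨t, ht⟩ := mkS_exists f x M N u hB K
  refine Set.mem_iUnion.2 ⟨t, (rS_iff f μ x M N K t u).2 ⟨ht, fun j _ s hms hsucc => ?_⟩⟩
  have hvisit : XX f x s u ≤ M := mkS_visit f x M N j s u hms
  have htr := succ_traj f μ x N s u hsucc N (le_refl N)
  have : XX f x (s+N) u ≤ (Gmin f μ)^[N] M := by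
    rw [htr]
    exact (hGmono.iterate N) hvisit
  exact hH ⟨s+N, le_of_lt (lt_of_le_of_lt this hGN)⟩

lemma u_rec [Nonempty ι] (hgmeas : ∀ n, Measurable (g n))
    (hindep : iIndepFun g P)
    (hlaw : ∀ n, Measure.map (g n) P = μ)
    (f : ι → ℝ → ℝ) (hfm : ∀ i, Measurable (f i)) (hGm : Measurable (Gmin f μ))
    (x M : ℝ) (N K : ℕ) :
    ∑' t, P ((fun ω k => g k ω) ⁻¹' RS f μ x M N (K+1) t)
      ≤ (1 - pmin μ ^ N) * ∑' t, P ((fun ω k => g k ω) ⁻¹' RS f μ x M N K t) := by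
  set pre := fun (V : Set (ℕ → ι)) => (fun ω (k : ℕ) => g k ω) ⁻¹' V with hpre
  have hgs : Measurable (fun ω (k : ℕ) => g k ω) := measurable_pi_lambda _ hgmeas
  have step1 : ∀ t, P (pre (RS f μ x M N (K+1) t))
      ≤ ∑' t', P (pre (RS f μ x M N K t' ∩ (SuccS f μ x N t')ᶜ ∩ DD f x M N t' t)) := by
    intro t
    calc P (pre (RS f μ x M N (K+1) t))
        ≤ P (pre (⋃ (t' : ℕ), (RS f μ x M N K t' ∩ (SuccS f μ x N t')ᶜ ∩ DD f x M N t' t))) :=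
          measure_mono (Set.preimage_mono (rS_succ_subset f μ x M N K t))
      _ = P (⋃ (t' : ℕ), pre (RS f μ x M N K t' ∩ (SuccS f μ x N t')ᶜ ∩ DD f x M N t' t)) := by
          simp only [hpre, Set.preimage_iUnion]
      _ ≤ ∑' t', P (pre (RS f μ x M N K t' ∩ (SuccS f μ x N t')ᶜ ∩ DD f x M N t' t)) :=
          measure_iUnion_le _
  have step2 : ∀ t', ∑' t, P (pre (RS f μ x M N K t' ∩ (SuccS f μ x N t')ᶜ ∩ DD f x M N t' t))
      ≤ P (pre (RS f μ x M N K t' ∩ (SuccS f μ x N t')ᶜ)) := by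
    intro t'
    have hmeas : ∀ t, MeasurableSet
        (pre (RS f μ x M N K t' ∩ (SuccS f μ x N t')ᶜ ∩ DD f x M N t' t)) :=
      fun t => hgs (((rS_meas f μ hfm hGm x M N K t').inter
        (succ_meas f hfm hGm x N t').compl).inter (dd_meas f hfm x M N t' t))
    have hdisj : Pairwise (Function.onFun Disjoint (fun t =>
        pre (RS f μ x M N K t' ∩ (SuccS f μ x N t')ᶜ ∩ DD f x M N t' t))) := by
      intro t t₂ hne
      refine Set.disjoint_left.2 (fun ω hω hω₂ => ?_)
      exact Set.disjoint_left.1 (dd_disj f x M N t' hne) hω.2 hω₂.2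
    rw [← measure_iUnion hdisj hmeas]
    refine measure_mono ?_
    rw [← Set.preimage_iUnion]
    refine Set.preimage_mono ?_
    exact Set.iUnion_subset (fun t => Set.inter_subset_left)
  have step3 : ∀ t', P (pre (RS f μ x M N K t' ∩ (SuccS f μ x N t')ᶜ))
      ≤ (1 - pmin μ ^ N) * P (pre (RS f μ x M N K t')) := by
    intro t'
    have hfb := fail_bound hgmeas hindep hlaw f hfm hGm x t' N (RS f μ x M N K t')
      (fun u v hagree hu => rS_det f μ x M N K t' u v hagree hu)
    have h1 : P (pre (RS f μ x M N K t' ∩ (SuccS f μ x N t')ᶜ))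
        ≤ P (pre (RS f μ x M N K t')) - pmin μ ^ N * P (pre (RS f μ x M N K t')) :=
      ENNReal.le_sub_of_add_le_right (ENNReal.mul_ne_top
        (ENNReal.pow_ne_top (lt_of_le_of_lt (le_trans (Finset.inf'_le _ (Sfin_nonempty μ).choose_spec) prob_le_one) ENNReal.one_lt_top).ne) (measure_ne_top P _)) hfb
    have h2 : (1 - pmin μ ^ N) * P (pre (RS f μ x M N K t'))
        = 1 * P (pre (RS f μ x M N K t')) - pmin μ ^ N * P (pre (RS f μ x M N K t')) :=
      ENNReal.sub_mul (fun _ _ => measure_ne_top P _)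
    rw [h2, one_mul]
    exact h1
  calc ∑' t, P (pre (RS f μ x M N (K+1) t))
      ≤ ∑' t, ∑' t', P (pre (RS f μ x M N K t' ∩ (SuccS f μ x N t')ᶜ ∩ DD f x M N t' t)) :=
        ENNReal.tsum_le_tsum step1
    _ = ∑' t', ∑' t, P (pre (RS f μ x M N K t' ∩ (SuccS f μ x N t')ᶜ ∩ DD f x M N t' t)) :=
        ENNReal.tsum_comm
    _ ≤ ∑' t', P (pre (RS f μ x M N K t' ∩ (SuccS f μ x N t')ᶜ)) := ENNReal.tsum_le_tsum step2
    _ ≤ ∑' t', (1 - pmin μ ^ N) * P (pre (RS f μ x M N K t')) := ENNReal.tsum_le_tsum step3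
    _ = (1 - pmin μ ^ N) * ∑' t, P (pre (RS f μ x M N K t)) := ENNReal.tsum_mul_left


end RdsAux

open RdsAux in
/-- under shiftability, if the inverse dynamics has a semi-infinite Radon
stationary measure (finite on right half-lines, infinite on left half-lines), then for
the forward dynamics every orbit tends to +∞ almost surely. -/
theorem rds_semiinfinite_stationary_implies_phiPlus_one
    {Ω : Type*} [MeasurableSpace Ω] (P : Measure Ω) [IsProbabilityMeasure P]
    {ι : Type*} [Fintype ι] [MeasurableSpace ι] [MeasurableSingletonClass ι]
    (f : ι → ℝ → ℝ)
    (hf : ∀ i, StrictMono (f i) ∧ Function.Bijective (f i))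
    (g : ℕ → Ω → ι) (hgmeas : ∀ n, Measurable (g n))
    (hindep : iIndepFun g P)
    (μ : Measure ι) [IsProbabilityMeasure μ] (hlaw : ∀ n, Measure.map (g n) P = μ)
    (F : ℕ → Ω → ℝ → ℝ)
    (hF0 : ∀ ω x, F 0 ω x = x)
    (hFS : ∀ n ω x, F (n + 1) ω x = f (g n ω) (F n ω x))
    (hshift : ∀ x : ℝ, 0 < μ {i | f i x < x} ∧ 0 < μ {i | x < f i x})
    (ν : Measure ℝ)
    (hfin : ∀ x : ℝ, ν (Set.Ici x) < ⊤)
    (hinf : ∀ x : ℝ, ν (Set.Iic x) = ⊤)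
    (hstat : ∀ A : Set ℝ, MeasurableSet A → ν A = ∑ i, μ {i} * ν (f i '' A)) :
    ∀ x : ℝ, P {ω | Tendsto (fun n => F n ω x) atTop atTop} = 1 := by
  intro x
  haveI : Nonempty ι := nonempty_of_prob μ
  have hmono : ∀ i, Monotone (f i) := fun i => (hf i).1.monotone
  have hfm : ∀ i, Measurable (f i) := fun i => (hmono i).measurable
  have hcont : ∀ i, Continuous (f i) := by
    intro i
    have h1 : Continuous (StrictMono.orderIsoOfSurjective (f i) (hf i).1 (hf i).2.2 : ℝ → ℝ) :=
      OrderIso.continuous _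
    rwa [StrictMono.coe_orderIsoOfSurjective] at h1
  have himg : ∀ i (y : ℝ), f i '' Set.Ici y = Set.Ici (f i y) := by
    intro i y
    have h1 := OrderIso.image_Ici (StrictMono.orderIsoOfSurjective (f i) (hf i).1 (hf i).2.2) y
    rwa [StrictMono.coe_orderIsoOfSurjective] at h1
  set h : ℝ → ℝ≥0∞ := fun y => ν (Set.Ici y) with hh
  have hanti : Antitone h := fun a b hab => measure_mono (Set.Ici_subset_Ici.2 hab)
  have hharm : ∀ y, ∑ i, μ {i} * h (f i y) = h y := by
    intro y
    show ∑ i, μ {i} * ν (Set.Ici (f i y)) = ν (Set.Ici y)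
    rw [hstat (Set.Ici y) measurableSet_Ici]
    exact Finset.sum_congr rfl (fun i _ => by rw [himg i y])
  have hhfin : ∀ y, h y ≠ ⊤ := fun y => (hfin y).ne
  -- unboundedness of h near -∞
  have hub : ∀ (Mv : ℝ≥0∞), Mv ≠ ⊤ → ∀ z : ℝ, ∃ c, c < z ∧ Mv < h c := by
    have hνtop : ν (univ : Set ℝ) = ⊤ :=
      top_le_iff.1 (le_trans (le_of_eq (hinf 0).symm) (measure_mono (Set.subset_univ _)))
    have huniv : (univ : Set ℝ) = ⋃ m : ℕ, Set.Ici (-(m:ℝ)) := by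
      ext y
      simp only [Set.mem_univ, true_iff, Set.mem_iUnion, Set.mem_Ici]
      obtain ⟨m, hm⟩ := exists_nat_ge (-y)
      exact ⟨m, by linarith⟩
    have hmon : Monotone (fun m : ℕ => Set.Ici (-(m:ℝ))) := by
      intro a b hab
      refine Set.Ici_subset_Ici.2 ?_
      have : (a:ℝ) ≤ b := Nat.cast_le.2 hab
      linarith
    have hsup : (⨆ m : ℕ, ν (Set.Ici (-(m:ℝ)))) = ⊤ := by
      rw [← Directed.measure_iUnion hmon.directed_le, ← huniv, hνtop]
    intro Mv hMv z
    have hlt : Mv < ⨆ m : ℕ, ν (Set.Ici (-(m:ℝ))) := by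
      rw [hsup]; exact Ne.lt_top hMv
    obtain ⟨m, hm⟩ := lt_iSup_iff.1 hlt
    refine ⟨min (-(m:ℝ)) (z-1), lt_of_le_of_lt (min_le_right _ _) (by linarith), ?_⟩
    exact lt_of_lt_of_le hm (hanti (min_le_left _ _))
  -- G facts
  have hGmono : Monotone (Gmin f μ) := Gmin_mono f μ hmono
  have hGcont : Continuous (Gmin f μ) := Gmin_continuous f μ hcont
  have hGm : Measurable (Gmin f μ) := hGmono.measurable
  have hGlt : ∀ y, Gmin f μ y < y := fun y => Gmin_lt_self f μ y (hshift y).1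
  -- trajectory identification
  have hFX : ∀ n ω, F n ω x = XX f x n (fun k => g k ω) := by
    intro n
    induction n with
    | zero => intro ω; rw [hF0]; rfl
    | succ n ih => intro ω; rw [hFS, ih ω]; rfl
  set pre := fun (V : Set (ℕ → ι)) => (fun ω (k : ℕ) => g k ω) ⁻¹' V with hpre
  have hgs : Measurable (fun ω (k : ℕ) => g k ω) := measurable_pi_lambda _ hgmeas
  -- key: every "visits ≤ m infinitely often" event is null
  have hB0 : ∀ m : ℕ, P (pre {u | ∀ k : ℕ, ∃ n, k ≤ n ∧ XX f x n u ≤ (m:ℝ)}) = 0 := by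
    intro m
    set Bm := {u : ℕ → ι | ∀ k : ℕ, ∃ n, k ≤ n ∧ XX f x n u ≤ (m:ℝ)} with hBm
    have hbound : ∀ j : ℕ, P (pre Bm) ≤ ((j:ℝ≥0∞)+1)⁻¹ := by
      intro j
      have hMvne : (h x + 1) * ((j:ℝ≥0∞)+1) ≠ ⊤ :=
        ENNReal.mul_ne_top (by simp [hhfin x]) (by simp)
      obtain ⟨c, hcz, hch⟩ := hub ((h x + 1) * ((j:ℝ≥0∞)+1)) hMvne x
      obtain ⟨N, hN⟩ := iterate_unbounded (Gmin f μ) hGcont hGlt hGmono (m:ℝ) c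
      set Hit := {u : ℕ → ι | ∃ n, XX f x n u ≤ c} with hHit
      set q := pmin μ ^ N with hq
      have hqne : q ≠ 0 := pow_ne_zero N (pmin_pos μ).ne'
      have hq1 : (1:ℝ≥0∞) - q < 1 :=
        ENNReal.sub_lt_self ENNReal.one_ne_top one_ne_zero hqne
      -- part II
      have hII : P (pre (Bm \ Hit)) = 0 := by
        have hu0 : ∑' t, P (pre (RS f μ x (m:ℝ) N 0 t)) ≤ 1 := by
          have hdisj : Pairwise (Function.onFun Disjoint
              (fun t => pre (RS f μ x (m:ℝ) N 0 t))) :=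
            fun t t' hne => Disjoint.preimage _ (rS_disj f μ x (m:ℝ) N 0 hne)
          have hmeas : ∀ t, MeasurableSet (pre (RS f μ x (m:ℝ) N 0 t)) :=
            fun t => hgs (rS_meas f μ hfm hGm x (m:ℝ) N 0 t)
          rw [← measure_iUnion hdisj hmeas]
          exact prob_le_one
        have huK : ∀ K, ∑' t, P (pre (RS f μ x (m:ℝ) N K t)) ≤ (1 - q) ^ K := by
          intro K
          induction K with
          | zero => simpa using hu0
          | succ K ih =>
            calc ∑' t, P (pre (RS f μ x (m:ℝ) N (K+1) t))
                ≤ (1 - q) * ∑' t, P (pre (RS f μ x (m:ℝ) N K t)) :=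
                  u_rec hgmeas hindep hlaw f hfm hGm x (m:ℝ) N K
              _ ≤ (1 - q) * (1 - q) ^ K := mul_le_mul_right ih _
              _ = (1 - q) ^ (K+1) := (pow_succ' _ _).symm
        have hPK : ∀ K, P (pre (Bm \ Hit)) ≤ (1 - q) ^ K := by
          intro K
          calc P (pre (Bm \ Hit))
              ≤ P (pre (⋃ t, RS f μ x (m:ℝ) N K t)) :=
                measure_mono (Set.preimage_mono (escape f μ x (m:ℝ) c N hGmono hN K))
            _ = P (⋃ t, pre (RS f μ x (m:ℝ) N K t)) := by
                simp only [hpre, Set.preimage_iUnion]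
            _ ≤ ∑' t, P (pre (RS f μ x (m:ℝ) N K t)) := measure_iUnion_le _
            _ ≤ (1 - q) ^ K := huK K
        have htend : Tendsto (fun K => ((1:ℝ≥0∞) - q) ^ K) atTop (nhds 0) :=
          ENNReal.tendsto_pow_atTop_nhds_zero_of_lt_one hq1
        have : P (pre (Bm \ Hit)) ≤ 0 :=
          ge_of_tendsto htend (Filter.Eventually.of_forall hPK)
        exact le_antisymm this zero_le
      -- part I
      have hI : P (pre Hit) ≤ ((j:ℝ≥0∞)+1)⁻¹ := by
        have hhit := hitting_bound hgmeas hindep hlaw f hfm h hanti hharm x c hcz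
        have h1 : (h x + 1) * (((j:ℝ≥0∞)+1) * P (pre Hit)) ≤ (h x + 1) * 1 := by
          calc (h x + 1) * (((j:ℝ≥0∞)+1) * P (pre Hit))
              = ((h x + 1) * ((j:ℝ≥0∞)+1)) * P (pre Hit) := by ring
            _ ≤ h c * P (pre Hit) := mul_le_mul_left (le_of_lt hch) _
            _ ≤ h x := hhit
            _ ≤ (h x + 1) * 1 := by simp
        have h2 : ((j:ℝ≥0∞)+1) * P (pre Hit) ≤ 1 :=
          (ENNReal.mul_le_mul_iff_right (by simp [hhfin x]) (by simp [hhfin x])).1 h1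
        rw [ENNReal.le_inv_iff_mul_le, mul_comm]
        exact h2
      calc P (pre Bm) ≤ P (pre (Bm \ Hit) ∪ pre Hit) := by
            refine measure_mono (fun ω hω => ?_)
            by_cases hH : (fun k => g k ω) ∈ Hit
            · exact Set.mem_union_right _ hH
            · exact Set.mem_union_left _ ⟨hω, hH⟩
        _ ≤ P (pre (Bm \ Hit)) + P (pre Hit) := measure_union_le _ _
        _ = P (pre Hit) := by rw [hII, zero_add]
        _ ≤ ((j:ℝ≥0∞)+1)⁻¹ := hI
    by_contra hne
    obtain ⟨n, hn⟩ := ENNReal.exists_inv_nat_lt hne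
    have h1 : P (pre Bm) ≤ ((n:ℝ≥0∞)+1)⁻¹ := hbound n
    have h2 : ((n:ℝ≥0∞)+1)⁻¹ ≤ ((n:ℝ≥0∞))⁻¹ := ENNReal.inv_le_inv' (by simp)
    exact absurd (lt_of_lt_of_le hn (le_trans h1 h2)) (lt_irrefl _)
  -- the complement of the tendsto event is covered by the Bm's
  set T := {u : ℕ → ι | Tendsto (fun n => XX f x n u) atTop atTop} with hT
  have hTpre : {ω | Tendsto (fun n => F n ω x) atTop atTop} = pre T := by
    ext ω
    have : (fun n => F n ω x) = fun n => XX f x n (fun k => g k ω) :=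
      funext (fun n => hFX n ω)
    simp only [mem_setOf_eq, hpre, Set.mem_preimage, hT, this]
  have hcover : Tᶜ ⊆ ⋃ m : ℕ, {u : ℕ → ι | ∀ k : ℕ, ∃ n, k ≤ n ∧ XX f x n u ≤ (m:ℝ)} := by
    intro u hu
    simp only [hT, Set.mem_compl_iff, mem_setOf_eq] at hu
    rw [tendsto_atTop_atTop] at hu
    push_neg at hu
    obtain ⟨b, hb⟩ := hu
    obtain ⟨m, hm⟩ := exists_nat_ge b
    refine Set.mem_iUnion.2 ⟨m, fun k => ?_⟩
    obtain ⟨n, hn1, hn2⟩ := hb k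
    exact ⟨n, hn1, le_trans (le_of_lt hn2) hm⟩
  have hcompl : P (pre Tᶜ) = 0 := by
    refine le_antisymm ?_ zero_le
    calc P (pre Tᶜ)
        ≤ P (pre (⋃ m : ℕ, {u : ℕ → ι | ∀ k : ℕ, ∃ n, k ≤ n ∧ XX f x n u ≤ (m:ℝ)})) :=
          measure_mono (Set.preimage_mono hcover)
      _ = P (⋃ m : ℕ, pre {u : ℕ → ι | ∀ k : ℕ, ∃ n, k ≤ n ∧ XX f x n u ≤ (m:ℝ)}) := by
          simp only [hpre, Set.preimage_iUnion]
      _ ≤ ∑' m : ℕ, P (pre {u : ℕ → ι | ∀ k : ℕ, ∃ n, k ≤ n ∧ XX f x n u ≤ (m:ℝ)}) :=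
          measure_iUnion_le _
      _ = 0 := by simp [hB0]
  rw [hTpre]
  refine le_antisymm prob_le_one ?_
  have hsplit : (1:ℝ≥0∞) = P (pre T ∪ (pre T)ᶜ) := by
    rw [Set.union_compl_self]
    exact measure_univ.symm
  calc (1:ℝ≥0∞) = P (pre T ∪ (pre T)ᶜ) := hsplit
    _ ≤ P (pre T) + P ((pre T)ᶜ) := measure_union_le _ _
    _ = P (pre T) := by
        have : (pre T)ᶜ = pre Tᶜ := by
          simp only [hpre]
          exact (Set.preimage_compl).symm
        rw [this, hcompl, add_zero]
end

section
/- Let an RDS on ℝ be generated by a finitely supported measure μ on Homeo⁺(ℝ) with shiftability, and suppose there is a compact interval J such that from every starting point the random orbit almost surely visits J infinitely often (recurrence). Then there exists a nonzero Radon stationary measure for the RDS. -/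
open MeasureTheory ProbabilityTheory Filter Set Topology
open scoped ENNReal Classical

set_option linter.unusedSectionVars false
set_option maxHeartbeats 1000000

section Words

variable {ι : Type*}

/-- action of an infinite word on ℝ: apply the first `n` letters. -/
def wAct (f : ι → ℝ → ℝ) (v : ℕ → ι) : ℕ → ℝ → ℝ
  | 0, x => x
  | (n+1), x => f (v n) (wAct f v n x)

lemma wAct_congr (f : ι → ℝ → ℝ) {v w : ℕ → ι} {n : ℕ} (h : ∀ k < n, v k = w k) (x : ℝ) :
    wAct f v n x = wAct f w n x := by
  induction n with
  | zero => rfl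
  | succ n ih =>
    simp only [wAct, ih (fun k hk => h k (hk.trans (Nat.lt_succ_self n))),
      h n (Nat.lt_succ_self n)]

lemma wAct_add (f : ι → ℝ → ℝ) (v : ℕ → ι) (n j : ℕ) (x : ℝ) :
    wAct f v (n + j) x = wAct f (fun k => v (n + k)) j (wAct f v n x) := by
  induction j with
  | zero => rfl
  | succ j ih =>
    show f (v (n+j)) (wAct f v (n+j) x) = _
    rw [ih]; rfl

lemma wAct_continuous (f : ι → ℝ → ℝ) (hcont : ∀ i, Continuous (f i)) (v : ℕ → ι) (n : ℕ) :
    Continuous (fun x => wAct f v n x) := by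
  induction n with
  | zero => exact continuous_id
  | succ n ih => exact (hcont (v n)).comp ih

/-- extend a finite word to an infinite word with junk letter `i₀`. -/
def extW (i₀ : ι) {n : ℕ} (v : Fin n → ι) : ℕ → ι :=
  fun k => if h : k < n then v ⟨k, h⟩ else i₀

lemma extW_lt (i₀ : ι) {n : ℕ} (v : Fin n → ι) {k : ℕ} (h : k < n) :
    extW i₀ v k = v ⟨k, h⟩ := dif_pos h

end Words

section Master

variable {Ω : Type*} [MeasurableSpace Ω] {P : Measure Ω} [IsProbabilityMeasure P]
  {ι : Type*} [Fintype ι] [MeasurableSpace ι] [MeasurableSingletonClass ι]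
  {g : ℕ → Ω → ι} {μ : Measure ι}

/-- Master lemma: the probability of an event depending on the first `L` letters is the
corresponding sum of products over words. -/
lemma master (hgmeas : ∀ n, Measurable (g n))
    (hindep : iIndepFun g P)
    (hlaw : ∀ n, Measure.map (g n) P = μ)
    (L : ℕ) (D : (Fin L → ι) → Prop) :
    P {ω | D (fun k => g k ω)} =
      ∑ v ∈ Finset.univ.filter D, ∏ k : Fin L, μ {v k} := by
  classical
  set E : (Fin L → ι) → Set Ω := fun v => ⋂ k : Fin L, (g k) ⁻¹' {v k} with hE
  have hEmeas : ∀ v, MeasurableSet (E v) := fun v =>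
    MeasurableSet.iInter (fun k => (hgmeas k) (measurableSet_singleton _))
  have hmemE : ∀ ω v, ω ∈ E v ↔ (fun k : Fin L => g k ω) = v := by
    intro ω v
    simp only [hE, Set.mem_iInter, Set.mem_preimage, Set.mem_singleton_iff]
    constructor
    · intro h; funext k; exact h k
    · intro h k; exact congrFun h k
  have hset : {ω | D (fun k => g k ω)} = ⋃ v ∈ Finset.univ.filter D, E v := by
    ext ω
    simp only [Set.mem_setOf_eq, Set.mem_iUnion, Finset.mem_filter, Finset.mem_univ, true_and]
    constructor
    · intro h; exact ⟨fun k => g k ω, h, (hmemE ω _).2 rfl⟩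
    · rintro ⟨v, hv, hωv⟩; rwa [(hmemE ω v).1 hωv]
  rw [hset, measure_biUnion_finset]
  · refine Finset.sum_congr rfl (fun v _ => ?_)
    have := hindep.measure_inter_preimage_eq_mul (S := Finset.range L)
      (sets := fun k => if h : k < L then {v ⟨k, h⟩} else Set.univ) ?_
    · have hEeq : (⋂ k ∈ Finset.range L, g k ⁻¹' (if h : k < L then {v ⟨k, h⟩} else Set.univ))
          = E v := by
        ext ω
        simp only [Set.mem_iInter, Finset.mem_range, hE, Set.mem_preimage]
        constructor
        · intro h k
          have := h k.1 k.2
          rwa [dif_pos k.2] at this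
        · intro h k hk
          rw [dif_pos hk]
          exact h ⟨k, hk⟩
      rw [hEeq] at this
      rw [this]
      rw [← Fin.prod_univ_eq_prod_range (fun k => P (g k ⁻¹' (if h : k < L then {v ⟨k, h⟩} else Set.univ))) L]
      refine Finset.prod_congr rfl (fun k _ => ?_)
      rw [dif_pos k.2]
      have : P (g k ⁻¹' {v ⟨k.1, k.2⟩}) = (Measure.map (g k) P) {v ⟨k.1, k.2⟩} := by
        rw [Measure.map_apply (hgmeas k) (measurableSet_singleton _)]
      rw [this, hlaw]
    · intro k _
      by_cases h : k < L
      · simp only [dif_pos h]; exact measurableSet_singleton _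
      · simp only [dif_neg h]; exact MeasurableSet.univ
  · intro u hu v hv huv
    simp only [Function.onFun]
    refine Set.disjoint_left.2 (fun ω hu' hv' => ?_)
    exact huv (((hmemE ω u).1 hu') ▸ ((hmemE ω v).1 hv') ▸ rfl)
  · exact fun v _ => hEmeas v

end Master

section Words2
variable {ι : Type*}

/-- gluing equivalence between words of length `n+m` and pairs. -/
def glueEquiv (ι : Type*) (n m : ℕ) : (Fin (n+m) → ι) ≃ (Fin n → ι) × (Fin m → ι) :=
  ((Equiv.arrowCongr finSumFinEquiv (Equiv.refl ι)).symm).trans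
    (Equiv.sumArrowEquivProdArrow _ _ _)

lemma glueEquiv_symm_apply (n m : ℕ) (u : Fin n → ι) (r : Fin m → ι) (k : Fin (n+m)) :
    (glueEquiv ι n m).symm (u, r) = fun k => Sum.elim u r (finSumFinEquiv.symm k) := by
  rfl

lemma glue_castAdd (n m : ℕ) (u : Fin n → ι) (r : Fin m → ι) (k : Fin n) :
    (glueEquiv ι n m).symm (u, r) (Fin.castAdd m k) = u k := by
  show Sum.elim u r (finSumFinEquiv.symm (Fin.castAdd m k)) = u k
  rw [finSumFinEquiv_symm_apply_castAdd]
  rfl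

lemma glue_natAdd (n m : ℕ) (u : Fin n → ι) (r : Fin m → ι) (k : Fin m) :
    (glueEquiv ι n m).symm (u, r) (Fin.natAdd n k) = r k := by
  show Sum.elim u r (finSumFinEquiv.symm (Fin.natAdd n k)) = r k
  rw [finSumFinEquiv_symm_apply_natAdd]
  rfl

variable {f : ι → ℝ → ℝ} {i₀ : ι}

lemma glue_act1 (n m : ℕ) (u : Fin n → ι) (r : Fin m → ι) (x : ℝ) :
    wAct f (extW i₀ ((glueEquiv ι n m).symm (u, r))) n x = wAct f (extW i₀ u) n x := by
  refine wAct_congr f (fun k hk => ?_) x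
  have h1 : k < n + m := hk.trans_le (Nat.le_add_right n m)
  show (if h : k < n + m then ((glueEquiv ι n m).symm (u, r)) ⟨k, h⟩ else i₀)
      = (if h : k < n then u ⟨k, h⟩ else i₀)
  rw [dif_pos h1, dif_pos hk]
  have : (⟨k, h1⟩ : Fin (n+m)) = Fin.castAdd m ⟨k, hk⟩ := by apply Fin.ext; rfl
  rw [this, glue_castAdd]

lemma glue_act2 (n m : ℕ) (u : Fin n → ι) (r : Fin m → ι) (x : ℝ) {j : ℕ} (hj : j ≤ m) :
    wAct f (extW i₀ ((glueEquiv ι n m).symm (u, r))) (n + j) x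
      = wAct f (extW i₀ r) j (wAct f (extW i₀ u) n x) := by
  rw [wAct_add, glue_act1]
  refine wAct_congr f (fun k hk => ?_) _
  have hkm : k < m := hk.trans_le hj
  have h1 : n + k < n + m := by omega
  show (if h : n + k < n + m then ((glueEquiv ι n m).symm (u, r)) ⟨n + k, h⟩ else i₀)
      = (if h : k < m then r ⟨k, h⟩ else i₀)
  rw [dif_pos h1, dif_pos hkm]
  have : (⟨n + k, h1⟩ : Fin (n+m)) = Fin.natAdd n ⟨k, hkm⟩ := by apply Fin.ext; rfl
  rw [this, glue_natAdd]
end Words2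


section Comb
variable {ι : Type*} [Fintype ι] [MeasurableSpace ι] {f : ι → ℝ → ℝ} {i₀ : ι}

lemma sum_one {μ : Measure ι} [MeasurableSingletonClass ι] [IsProbabilityMeasure μ] :
    ∑ i : ι, μ {i} = 1 := by
  have : μ Set.univ = ∑ i : ι, μ {i} := by
    rw [show (Set.univ : Set ι) = ⋃ i ∈ (Finset.univ : Finset ι), {i} by
      simp [Set.iUnion_of_singleton ι]]
    rw [measure_biUnion_finset]
    · intro u _ v _ huv
      simpa [Function.onFun] using huv
    · exact fun i _ => measurableSet_singleton _
  rw [← this, measure_univ]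

lemma marg (μ : Measure ι) (hμ1 : ∑ i : ι, μ {i} = 1) {M : ℕ} (S : Finset (Fin M))
    (c : Fin M → ι) :
    ∑ r ∈ Finset.univ.filter (fun r : Fin M → ι => ∀ k ∈ S, r k = c k), ∏ k, μ {r k}
      = ∏ k ∈ S, μ {c k} := by
  classical
  rw [Finset.sum_filter]
  have hpt : ∀ r : Fin M → ι, (if (∀ k ∈ S, r k = c k) then ∏ k, μ {r k} else 0)
      = ∏ k, (if k ∈ S then (if r k = c k then μ {r k} else 0) else μ {r k}) := by
    intro r
    by_cases h : ∀ k ∈ S, r k = c k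
    · rw [if_pos h]
      refine Finset.prod_congr rfl (fun k _ => ?_)
      by_cases hk : k ∈ S
      · rw [if_pos hk, if_pos (h k hk)]
      · rw [if_neg hk]
    · rw [if_neg h]
      push_neg at h
      obtain ⟨k₀, hk₀S, hk₀⟩ := h
      exact (Finset.prod_eq_zero (Finset.mem_univ k₀) (by rw [if_pos hk₀S, if_neg hk₀])).symm
  simp_rw [hpt]
  have hps := Fintype.prod_sum (fun (k : Fin M) (i : ι) =>
    if k ∈ S then (if i = c k then μ {i} else 0) else μ {i})
  rw [← hps]
  have hfac : ∀ k : Fin M, (∑ i : ι, if k ∈ S then (if i = c k then μ {i} else 0) else μ {i})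
      = if k ∈ S then μ {c k} else 1 := by
    intro k
    by_cases hk : k ∈ S
    · simp only [if_pos hk]
      rw [Finset.sum_ite_eq' Finset.univ (c k) (fun i => μ {i})]
      simp
    · simp only [if_neg hk]; exact hμ1
  rw [Finset.prod_congr rfl (fun k _ => hfac k)]
  rw [Finset.prod_ite_mem Finset.univ S (fun k => μ {c k}), Finset.univ_inter]

lemma glue_weight (μ : Measure ι) (n m : ℕ) (u : Fin n → ι) (r : Fin m → ι) :
    (∏ k : Fin (n+m), μ {((glueEquiv ι n m).symm (u, r)) k})
      = (∏ k, μ {u k}) * (∏ k, μ {r k}) := by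
  rw [← Equiv.prod_comp finSumFinEquiv
    (fun k => μ {((glueEquiv ι n m).symm (u, r)) k})]
  rw [Fintype.prod_sum_type]
  congr 1
  · refine Finset.prod_congr rfl (fun k _ => ?_)
    rw [finSumFinEquiv_apply_left, glue_castAdd]
  · refine Finset.prod_congr rfl (fun k _ => ?_)
    rw [finSumFinEquiv_apply_right, glue_natAdd]

lemma suffbound (μ : Measure ι) (hμ1 : ∑ i : ι, μ {i} = 1) {M ℓ : ℕ}
    (hl1 : 0 < ℓ) (hlM : ℓ ≤ M) (w : Fin ℓ → ι) (y : ℝ) (Jp : Set ℝ)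
    (hw : wAct f (extW i₀ w) ℓ y ∈ Jp) :
    (∏ k, μ {w k}) ≤ ∑ r ∈ Finset.univ.filter
        (fun r : Fin M → ι => ∃ j, 1 ≤ j ∧ j ≤ M ∧ wAct f (extW i₀ r) j y ∈ Jp),
      ∏ k, μ {r k} := by
  classical
  set S : Finset (Fin M) := Finset.univ.filter (fun k => k.1 < ℓ) with hS
  set c : Fin M → ι := fun k => if h : k.1 < ℓ then w ⟨k.1, h⟩ else w ⟨0, hl1⟩ with hc
  have hsub : Finset.univ.filter (fun r : Fin M → ι => ∀ k ∈ S, r k = c k)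
      ⊆ Finset.univ.filter
        (fun r : Fin M → ι => ∃ j, 1 ≤ j ∧ j ≤ M ∧ wAct f (extW i₀ r) j y ∈ Jp) := by
    intro r hr
    simp only [Finset.mem_filter, Finset.mem_univ, true_and] at hr ⊢
    refine ⟨ℓ, hl1, hlM, ?_⟩
    have : wAct f (extW i₀ r) ℓ y = wAct f (extW i₀ w) ℓ y := by
      refine wAct_congr f (fun k hk => ?_) y
      have hkM : k < M := hk.trans_le hlM
      show (if h : k < M then r ⟨k, h⟩ else i₀) = (if h : k < ℓ then w ⟨k, h⟩ else i₀)
      rw [dif_pos hkM, dif_pos hk]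
      have hmem : (⟨k, hkM⟩ : Fin M) ∈ S := by
        simp only [hS, Finset.mem_filter, Finset.mem_univ, true_and]; exact hk
      rw [hr _ hmem, hc]
      simp only [dif_pos hk]
    rwa [this]
  refine le_trans ?_ (Finset.sum_le_sum_of_subset hsub)
  rw [marg μ hμ1 S c]
  have hSmap : S = Finset.map (Fin.castLEEmb hlM) Finset.univ := by
    ext k
    simp only [hS, Finset.mem_filter, Finset.mem_univ, true_and, Finset.mem_map]
    constructor
    · intro hk
      exact ⟨⟨k.1, hk⟩, by apply Fin.ext; rfl⟩
    · rintro ⟨j, -, rfl⟩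
      exact j.2
  rw [hSmap, Finset.prod_map]
  apply le_of_eq
  refine (Finset.prod_congr rfl (fun j _ => ?_))
  have hj : ((Fin.castLEEmb hlM j : Fin M) : ℕ) < ℓ := j.2
  show μ {w j} = μ {c (Fin.castLEEmb hlM j)}
  rw [hc]
  simp only [dif_pos hj]
  congr 1

end Comb


section SplitLast
variable {ι : Type*} [Fintype ι] [MeasurableSpace ι] {f : ι → ℝ → ℝ}
-- test piece for onestep combinatorics
lemma split_last (μ : Measure ι) (i₀ : ι) (n : ℕ) (x : ℝ) (B : Set ℝ) :
    ∑ v ∈ Finset.univ.filter (fun v : Fin (n+1) → ι => wAct f (extW i₀ v) (n+1) x ∈ B),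
        ∏ k : Fin (n+1), μ {v k} =
    ∑ i : ι, μ {i} * ∑ u ∈ Finset.univ.filter
        (fun u : Fin n → ι => wAct f (extW i₀ u) n x ∈ f i ⁻¹' B), ∏ k : Fin n, μ {u k} := by
  classical
  rw [Finset.sum_filter]
  rw [← Equiv.sum_comp (Fin.insertNthEquiv (fun _ => ι) (Fin.last n))]
  have hsnoc : ∀ p : ι × (Fin n → ι),
      (Fin.insertNthEquiv (fun _ => ι) (Fin.last n)) p = Fin.snoc p.2 p.1 := by
    intro p
    simp [Fin.insertNthEquiv, Fin.insertNth_last']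
  rw [Fintype.sum_prod_type]
  refine Finset.sum_congr rfl (fun i _ => ?_)
  rw [Finset.mul_sum, Finset.sum_filter]
  refine Finset.sum_congr rfl (fun u _ => ?_)
  rw [hsnoc]
  have hw : ∏ k : Fin (n+1), μ {(Fin.snoc u i : Fin (n+1) → ι) k} = (∏ k : Fin n, μ {u k}) * μ {i} := by
    rw [Fin.prod_univ_castSucc]
    simp [Fin.snoc_castSucc, Fin.snoc_last]
  have hact0 : wAct f (extW i₀ (Fin.snoc u i : Fin (n+1) → ι)) n x
      = wAct f (extW i₀ u) n x := by
    refine wAct_congr f (fun k hk => ?_) x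
    have h1 : k < n + 1 := hk.trans (Nat.lt_succ_self n)
    show (if h : k < n+1 then (Fin.snoc u i : Fin (n+1) → ι) ⟨k, h⟩ else i₀)
        = (if h : k < n then u ⟨k, h⟩ else i₀)
    rw [dif_pos h1, dif_pos hk]
    have : (⟨k, h1⟩ : Fin (n+1)) = Fin.castSucc ⟨k, hk⟩ := by
      apply Fin.ext; rfl
    rw [this, Fin.snoc_castSucc]
  have hact : wAct f (extW i₀ (Fin.snoc u i : Fin (n+1) → ι)) (n+1) x
      = f i (wAct f (extW i₀ u) n x) := by
    show f (extW i₀ (Fin.snoc u i : Fin (n+1) → ι) n) _ = _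
    rw [hact0]
    congr 1
    show (if h : n < n+1 then (Fin.snoc u i : Fin (n+1) → ι) ⟨n, h⟩ else i₀) = i
    rw [dif_pos (Nat.lt_succ_self n)]
    have : (⟨n, Nat.lt_succ_self n⟩ : Fin (n+1)) = Fin.last n := rfl
    rw [this, Fin.snoc_last]
  rw [hw, hact]
  by_cases hB : f i (wAct f (extW i₀ u) n x) ∈ B
  · rw [if_pos (show wAct f (extW i₀ u) n x ∈ f i ⁻¹' B from hB), if_pos hB]; ring
  · rw [if_neg (show wAct f (extW i₀ u) n x ∉ f i ⁻¹' B from hB), if_neg hB]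

end SplitLast

section Prob
variable {Ω : Type*} [MeasurableSpace Ω] {P : Measure Ω} [IsProbabilityMeasure P]
  {ι : Type*} [Fintype ι] [MeasurableSpace ι] [MeasurableSingletonClass ι]
  {g : ℕ → Ω → ι} {μ : Measure ι} {f : ι → ℝ → ℝ} {F : ℕ → Ω → ℝ → ℝ}

lemma fdet (hF0 : ∀ ω x, F 0 ω x = x) (hFS : ∀ n ω x, F (n + 1) ω x = f (g n ω) (F n ω x))
    (n : ℕ) (ω : Ω) (x : ℝ) : F n ω x = wAct f (fun k => g k ω) n x := by
  induction n with
  | zero => exact hF0 ω x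
  | succ n ih => rw [hFS, ih]; rfl

lemma ext_restr (i₀ : ι) (n m : ℕ) (hm : m ≤ n) (ω : Ω) (x : ℝ) :
    wAct f (extW i₀ (fun k : Fin n => g k ω)) m x = wAct f (fun k => g k ω) m x := by
  refine wAct_congr f (fun k hk => ?_) x
  have hkn : k < n := hk.trans_le hm
  show (if h : k < n then g (↑(⟨k, h⟩ : Fin n)) ω else i₀) = g k ω
  rw [dif_pos hkn]

lemma eword (i₀ : ι) (hgmeas : ∀ n, Measurable (g n))
    (hindep : iIndepFun g P)
    (hlaw : ∀ n, Measure.map (g n) P = μ)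
    (hF0 : ∀ ω x, F 0 ω x = x) (hFS : ∀ n ω x, F (n + 1) ω x = f (g n ω) (F n ω x))
    (n : ℕ) (x : ℝ) (B : Set ℝ) :
    P {ω | F n ω x ∈ B} = ∑ v ∈ Finset.univ.filter
        (fun v : Fin n → ι => wAct f (extW i₀ v) n x ∈ B), ∏ k, μ {v k} := by
  have hset : {ω | F n ω x ∈ B}
      = {ω | (fun v : Fin n → ι => wAct f (extW i₀ v) n x ∈ B) (fun k => g k ω)} := by
    ext ω
    simp only [Set.mem_setOf_eq]
    rw [fdet hF0 hFS, ← ext_restr i₀ n n le_rfl ω x]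
  rw [hset]
  exact master hgmeas hindep hlaw n (fun v : Fin n → ι => wAct f (extW i₀ v) n x ∈ B)

lemma onestep (i₀ : ι) (hgmeas : ∀ n, Measurable (g n))
    (hindep : iIndepFun g P)
    (hlaw : ∀ n, Measure.map (g n) P = μ)
    (hF0 : ∀ ω x, F 0 ω x = x) (hFS : ∀ n ω x, F (n + 1) ω x = f (g n ω) (F n ω x))
    (n : ℕ) (x : ℝ) (B : Set ℝ) :
    P {ω | F (n+1) ω x ∈ B} = ∑ i : ι, μ {i} * P {ω | F n ω x ∈ f i ⁻¹' B} := by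
  rw [eword i₀ hgmeas hindep hlaw hF0 hFS (n+1) x B, split_last μ i₀ n x B]
  exact Finset.sum_congr rfl fun i _ => by
    rw [eword i₀ hgmeas hindep hlaw hF0 hFS n x (f i ⁻¹' B)]

lemma hitbound [IsProbabilityMeasure μ] (i₀ : ι) (hgmeas : ∀ n, Measurable (g n))
    (hindep : iIndepFun g P)
    (hlaw : ∀ n, Measure.map (g n) P = μ)
    (hF0 : ∀ ω x, F 0 ω x = x) (hFS : ∀ n ω x, F (n + 1) ω x = f (g n ω) (F n ω x))
    (K Jp : Set ℝ) (M : ℕ) (p₀ : ℝ≥0∞)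
    (huni : ∀ y ∈ K, ∃ (ℓ : ℕ) (w : Fin ℓ → ι), 0 < ℓ ∧ ℓ ≤ M ∧ (p₀ ≤ ∏ k, μ {w k}) ∧
      wAct f (extW i₀ w) ℓ y ∈ Jp)
    (x : ℝ) (n : ℕ) :
    p₀ * P {ω | F n ω x ∈ K} ≤ ∑ j ∈ Finset.Icc 1 M, P {ω | F (n+j) ω x ∈ Jp} := by
  classical
  have hμ1 : ∑ i : ι, μ {i} = 1 := sum_one
  set D : (Fin (n+M) → ι) → Prop := fun v => wAct f (extW i₀ v) n x ∈ K ∧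
    ∃ j, 1 ≤ j ∧ j ≤ M ∧ wAct f (extW i₀ v) (n+j) x ∈ Jp with hD
  -- Step 1: identify the event
  have hev : {ω | D (fun k => g k ω)}
      = {ω | F n ω x ∈ K ∧ ∃ j, 1 ≤ j ∧ j ≤ M ∧ F (n+j) ω x ∈ Jp} := by
    ext ω
    simp only [Set.mem_setOf_eq, hD]
    have h1 : ∀ m, m ≤ n + M →
        wAct f (extW i₀ (fun k : Fin (n+M) => g k ω)) m x = F m ω x := by
      intro m hm
      rw [ext_restr i₀ (n+M) m hm ω x, fdet hF0 hFS]
    constructor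
    · rintro ⟨hK, j, hj1, hjM, hJp⟩
      exact ⟨by rw [← h1 n (Nat.le_add_right n M)]; exact hK, j, hj1, hjM,
        by rw [← h1 (n+j) (by omega)]; exact hJp⟩
    · rintro ⟨hK, j, hj1, hjM, hJp⟩
      exact ⟨by rw [h1 n (Nat.le_add_right n M)]; exact hK, j, hj1, hjM,
        by rw [h1 (n+j) (by omega)]; exact hJp⟩
  -- Step 2: the master formula and the combinatorial lower bound
  have hmaster := master (μ := μ) hgmeas hindep hlaw (n+M) D
  -- lower bound for the word sum
  have hcomb : p₀ * P {ω | F n ω x ∈ K} ≤ ∑ v ∈ Finset.univ.filter D, ∏ k, μ {v k} := by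
    rw [eword i₀ hgmeas hindep hlaw hF0 hFS n x K]
    rw [Finset.sum_filter, Finset.sum_filter]
    rw [← Equiv.sum_comp ((glueEquiv ι n M).symm)
      (fun v => if D v then ∏ k, μ {v k} else 0)]
    rw [Fintype.sum_prod_type]
    rw [Finset.mul_sum]
    refine Finset.sum_le_sum (fun u _ => ?_)
    by_cases hK : wAct f (extW i₀ u) n x ∈ K
    · rw [if_pos hK]
      obtain ⟨ℓ, w, hl0, hlM, hp₀, hwJp⟩ := huni _ hK
      have hsuff := suffbound (f := f) (i₀ := i₀) μ hμ1 hl0 hlM w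
        (wAct f (extW i₀ u) n x) Jp hwJp
      have hinner : ∀ r : Fin M → ι, D ((glueEquiv ι n M).symm (u, r)) ↔
          (∃ j, 1 ≤ j ∧ j ≤ M ∧ wAct f (extW i₀ r) j (wAct f (extW i₀ u) n x) ∈ Jp) := by
        intro r
        simp only [hD]
        constructor
        · rintro ⟨-, j, hj1, hjM, hJp⟩
          rw [glue_act2 n M u r x hjM] at hJp
          exact ⟨j, hj1, hjM, hJp⟩
        · rintro ⟨j, hj1, hjM, hJp⟩
          refine ⟨by rw [glue_act1]; exact hK, j, hj1, hjM, ?_⟩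
          rw [glue_act2 n M u r x hjM]
          exact hJp
      calc p₀ * ∏ k, μ {u k}
          ≤ (∏ k, μ {w k}) * ∏ k, μ {u k} := by
            exact mul_le_mul_left hp₀ _
        _ ≤ (∑ r ∈ Finset.univ.filter
              (fun r : Fin M → ι => ∃ j, 1 ≤ j ∧ j ≤ M ∧
                wAct f (extW i₀ r) j (wAct f (extW i₀ u) n x) ∈ Jp),
              ∏ k, μ {r k}) * ∏ k, μ {u k} := mul_le_mul_left hsuff _
        _ = ∑ r : Fin M → ι, if D ((glueEquiv ι n M).symm (u, r))
              then ∏ k : Fin (n+M), μ {((glueEquiv ι n M).symm (u, r)) k} else 0 := by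
            rw [Finset.sum_filter, Finset.sum_mul]
            refine Finset.sum_congr rfl (fun r _ => ?_)
            rw [glue_weight μ n M u r]
            by_cases hQ : ∃ j, 1 ≤ j ∧ j ≤ M ∧
                wAct f (extW i₀ r) j (wAct f (extW i₀ u) n x) ∈ Jp
            · rw [if_pos hQ, if_pos ((hinner r).2 hQ), mul_comm]
            · rw [if_neg hQ, if_neg (fun h => hQ ((hinner r).1 h)), zero_mul]
    · rw [if_neg hK, mul_zero]
      exact Finset.sum_nonneg (fun r _ => zero_le)
  -- Step 3: union bound
  have hub : P {ω | F n ω x ∈ K ∧ ∃ j, 1 ≤ j ∧ j ≤ M ∧ F (n+j) ω x ∈ Jp}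
      ≤ ∑ j ∈ Finset.Icc 1 M, P {ω | F (n+j) ω x ∈ Jp} := by
    refine le_trans (measure_mono ?_) (measure_biUnion_finset_le _ _)
    rintro ω ⟨-, j, hj1, hjM, hJp⟩
    exact Set.mem_biUnion (Finset.mem_Icc.2 ⟨hj1, hjM⟩) hJp
  refine le_trans hcomb (le_trans (le_of_eq ?_) (le_trans (le_of_eq (congrArg P hev)) hub))
  rw [hmaster]
  exact Finset.sum_congr (by congr) (fun _ _ => rfl)

end Prob

section Analytic
variable {Ω : Type*} [MeasurableSpace Ω] {P : Measure Ω} [IsProbabilityMeasure P]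
  {ι : Type*} [Fintype ι] [MeasurableSpace ι] [MeasurableSingletonClass ι]
  {g : ℕ → Ω → ι} {μ : Measure ι} {f : ι → ℝ → ℝ} {F : ℕ → Ω → ℝ → ℝ}

lemma measX (hgmeas : ∀ n, Measurable (g n)) (hcont : ∀ i, Continuous (f i))
    (hF0 : ∀ ω x, F 0 ω x = x) (hFS : ∀ n ω x, F (n + 1) ω x = f (g n ω) (F n ω x))
    (x : ℝ) (n : ℕ) : Measurable (fun ω => F n ω x) := by
  induction n with
  | zero => simp only [hF0]; exact measurable_const
  | succ n ih =>
    have heq : (fun ω => F (n+1) ω x) = (fun p : ℝ × ι => f p.2 p.1) ∘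
        (fun ω => (F n ω x, g n ω)) := by
      funext ω; exact hFS n ω x
    rw [heq]
    exact (measurable_from_prod_countable_left
      (fun i => (hcont i).measurable)).comp (ih.prodMk (hgmeas n))

lemma uniform_hitting [IsProbabilityMeasure μ] (i₀ : ι)
    (hcont : ∀ i, Continuous (f i))
    (hgmeas : ∀ n, Measurable (g n))
    (hindep : iIndepFun g P)
    (hlaw : ∀ n, Measure.map (g n) P = μ)
    (hF0 : ∀ ω x, F 0 ω x = x) (hFS : ∀ n ω x, F (n + 1) ω x = f (g n ω) (F n ω x))
    (a b : ℝ) (hrec : ∀ x : ℝ, P {ω | ∃ᶠ n in atTop, F n ω x ∈ Set.Icc a b} = 1)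
    (c d : ℝ) :
    ∃ (M : ℕ) (p₀ : ℝ≥0∞), 0 < M ∧ 0 < p₀ ∧ ∀ y ∈ Set.Icc c d,
      ∃ (ℓ : ℕ) (w : Fin ℓ → ι), 0 < ℓ ∧ ℓ ≤ M ∧ (p₀ ≤ ∏ k, μ {w k}) ∧
        wAct f (extW i₀ w) ℓ y ∈ Set.Ioo (a-1) (b+1) := by
  classical
  -- step 1: for every y there is a positive-probability word landing in [a,b]
  have hword : ∀ y : ℝ, ∃ (ℓ : ℕ) (w : Fin ℓ → ι), 0 < ℓ ∧ 0 < ∏ k, μ {w k} ∧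
      wAct f (extW i₀ w) ℓ y ∈ Set.Icc a b := by
    intro y
    have h1 : P {ω | ∃ n : ℕ, F (n+1) ω y ∈ Set.Icc a b} = 1 := by
      refine le_antisymm prob_le_one ?_
      rw [← hrec y]
      refine measure_mono (fun ω hω => ?_)
      simp only [Set.mem_setOf_eq] at hω ⊢
      obtain ⟨n, hn1, hn⟩ := (frequently_atTop.1 hω) 1
      exact ⟨n - 1, by rwa [Nat.sub_add_cancel hn1]⟩
    have h2 : ∃ n : ℕ, P {ω | F (n+1) ω y ∈ Set.Icc a b} ≠ 0 := by
      by_contra h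
      push_neg at h
      have hzero : P {ω | ∃ n : ℕ, F (n+1) ω y ∈ Set.Icc a b} = 0 := by
        have : {ω | ∃ n : ℕ, F (n+1) ω y ∈ Set.Icc a b}
            = ⋃ n : ℕ, {ω | F (n+1) ω y ∈ Set.Icc a b} := by
          ext ω; simp
        rw [this]
        exact measure_iUnion_null h
      rw [h1] at hzero
      exact one_ne_zero hzero
    obtain ⟨n, hn⟩ := h2
    rw [eword i₀ hgmeas hindep hlaw hF0 hFS (n+1) y (Set.Icc a b)] at hn
    obtain ⟨v, hvmem, hvne⟩ := Finset.exists_ne_zero_of_sum_ne_zero hn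
    simp only [Finset.mem_filter, Finset.mem_univ, true_and] at hvmem
    exact ⟨n+1, v, Nat.succ_pos n, pos_iff_ne_zero.2 hvne, hvmem⟩
  choose ℓw wfun hl0 hppos hact using hword
  set V : ℝ → Set ℝ :=
    fun y => (fun x => wAct f (extW i₀ (wfun y)) (ℓw y) x) ⁻¹' (Set.Ioo (a-1) (b+1)) with hV
  have hVopen : ∀ y, IsOpen (V y) :=
    fun y => (isOpen_Ioo).preimage (wAct_continuous f hcont _ _)
  have hcover : Set.Icc c d ⊆ ⋃ y : ℝ, V y := by
    intro y _
    refine Set.mem_iUnion.2 ⟨y, ?_⟩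
    simp only [hV, Set.mem_preimage, Set.mem_Ioo]
    obtain ⟨h1, h2⟩ := hact y
    constructor <;> linarith
  obtain ⟨t, ht⟩ := isCompact_Icc.elim_finite_subcover V hVopen hcover
  refine ⟨(t.sup ℓw) + 1, ∏ y ∈ t, ∏ k, μ {wfun y k}, Nat.succ_pos _, ?_, ?_⟩
  · rw [pos_iff_ne_zero]
    rw [Finset.prod_ne_zero_iff]
    exact fun y _ => (pos_iff_ne_zero.1 (hppos y))
  · intro y hy
    obtain ⟨y', hy't, hy'⟩ := Set.mem_iUnion₂.1 (ht hy)
    refine ⟨ℓw y', wfun y', hl0 y', ?_, ?_, hy'⟩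
    · exact le_trans (Finset.le_sup hy't) (Nat.le_succ _)
    · calc ∏ z ∈ t, ∏ k, μ {wfun z k}
          = (∏ k, μ {wfun y' k}) * ∏ z ∈ t.erase y', ∏ k, μ {wfun z k} :=
            (Finset.mul_prod_erase t _ hy't).symm
        _ ≤ (∏ k, μ {wfun y' k}) * 1 := by
            refine mul_le_mul_right (Finset.prod_le_one (fun z _ => zero_le)
              (fun z _ => Finset.prod_le_one (fun k _ => zero_le)
                (fun k _ => prob_le_one))) _
        _ = ∏ k, μ {wfun y' k} := mul_one _

lemma occupation_top (hgmeas : ∀ n, Measurable (g n)) (hcont : ∀ i, Continuous (f i))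
    (hF0 : ∀ ω x, F 0 ω x = x) (hFS : ∀ n ω x, F (n + 1) ω x = f (g n ω) (F n ω x))
    (a b x : ℝ) (hrec1 : P {ω | ∃ᶠ n in atTop, F n ω x ∈ Set.Icc a b} = 1) :
    Tendsto (fun N => ∑ n ∈ Finset.range N, P {ω | F n ω x ∈ Set.Icc a b}) atTop (𝓝 ∞) := by
  have hEmeas : ∀ n, MeasurableSet {ω | F n ω x ∈ Set.Icc a b} :=
    fun n => (measX hgmeas hcont hF0 hFS x n) measurableSet_Icc
  have htsum : ∑' n, P {ω | F n ω x ∈ Set.Icc a b} = ∞ := by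
    have h1 : ∀ n : ℕ, P {ω | F n ω x ∈ Set.Icc a b}
        = ∫⁻ ω, ({ω | F n ω x ∈ Set.Icc a b}).indicator (fun _ => (1:ℝ≥0∞)) ω ∂P := by
      intro n
      rw [lintegral_indicator (hEmeas n), setLIntegral_one]
    calc ∑' n, P {ω | F n ω x ∈ Set.Icc a b}
        = ∑' n, ∫⁻ ω, ({ω | F n ω x ∈ Set.Icc a b}).indicator (fun _ => (1:ℝ≥0∞)) ω ∂P :=
          tsum_congr (fun n => h1 n)
      _ = ∫⁻ ω, ∑' n, ({ω | F n ω x ∈ Set.Icc a b}).indicator (fun _ => (1:ℝ≥0∞)) ω ∂P :=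
          (lintegral_tsum (fun n =>
            (measurable_const.indicator (hEmeas n)).aemeasurable)).symm
      _ = ∞ := by
          have hAmeas : MeasurableSet {ω | ∃ᶠ n in atTop, F n ω x ∈ Set.Icc a b} := by
            have : {ω | ∃ᶠ n in atTop, F n ω x ∈ Set.Icc a b}
                = ⋂ m : ℕ, ⋃ n : ℕ, ⋃ (_ : m ≤ n), {ω | F n ω x ∈ Set.Icc a b} := by
              ext ω
              simp only [Set.mem_setOf_eq, Set.mem_iInter, Set.mem_iUnion]
              rw [frequently_atTop]
              constructor
              · intro hω m
                obtain ⟨n, hmn, hn⟩ := hω m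
                exact ⟨n, hmn, hn⟩
              · intro hω m
                obtain ⟨n, hmn, hn⟩ := hω m
                exact ⟨n, hmn, hn⟩
            rw [this]
            exact MeasurableSet.iInter (fun m => MeasurableSet.iUnion (fun n =>
              MeasurableSet.iUnion (fun _ => hEmeas n)))
          have hae : ∀ᵐ ω ∂P, ω ∈ {ω | ∃ᶠ n in atTop, F n ω x ∈ Set.Icc a b} := by
            rw [ae_iff]
            have : {ω | ¬ ω ∈ {ω | ∃ᶠ n in atTop, F n ω x ∈ Set.Icc a b}}
                = {ω | ∃ᶠ n in atTop, F n ω x ∈ Set.Icc a b}ᶜ := rfl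
            rw [this, prob_compl_eq_zero_iff hAmeas]
            exact hrec1
          have hconst : ∀ᵐ ω ∂P,
              ∑' n, ({ω | F n ω x ∈ Set.Icc a b}).indicator (fun _ => (1:ℝ≥0∞)) ω = ∞ := by
            filter_upwards [hae] with ω hω
            have hS : {n : ℕ | F n ω x ∈ Set.Icc a b}.Infinite :=
              Nat.frequently_atTop_iff_infinite.1 hω
            have heq : ∀ n : ℕ,
                ({ω | F n ω x ∈ Set.Icc a b}).indicator (fun _ => (1:ℝ≥0∞)) ω
                = ({n : ℕ | F n ω x ∈ Set.Icc a b}).indicator (fun _ => (1:ℝ≥0∞)) n := by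
              intro n
              rw [Set.indicator_apply, Set.indicator_apply]
              rfl
            rw [tsum_congr heq, ← tsum_subtype]
            haveI := hS.to_subtype
            exact ENNReal.tsum_const_eq_top_of_ne_zero one_ne_zero
          rw [lintegral_congr_ae (hconst.mono (fun ω h => h))]
          simp [lintegral_const]
  have := ENNReal.tendsto_nat_tsum (fun n => P {ω | F n ω x ∈ Set.Icc a b})
  rwa [htsum] at this

end Analytic

section Ulim

/-- limit along the hyperfilter (a fixed free ultrafilter on ℕ). -/
noncomputable def ulim (x : ℕ → ℝ) : ℝ :=
  limUnder (Filter.hyperfilter ℕ : Filter ℕ) x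

lemma ulim_tendsto {x : ℕ → ℝ} (h : ∃ C : ℝ, ∀ N, |x N| ≤ C) :
    Tendsto x (Filter.hyperfilter ℕ : Filter ℕ) (𝓝 (ulim x)) := by
  obtain ⟨C, hC⟩ := h
  have hmem : Set.Icc (-C) C ∈ (Filter.hyperfilter ℕ).map x := by
    have : ∀ N, x N ∈ Set.Icc (-C) C := fun N => abs_le.1 (hC N)
    exact Filter.mem_map.2 (Filter.univ_mem' this)
  obtain ⟨l, -, hl⟩ := isCompact_Icc.ultrafilter_le_nhds
    ((Filter.hyperfilter ℕ).map x) (Filter.le_principal_iff.2 hmem)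
  exact tendsto_nhds_limUnder ⟨l, hl⟩

lemma ulim_unique {x : ℕ → ℝ} {l : ℝ}
    (h : Tendsto x (Filter.hyperfilter ℕ : Filter ℕ) (𝓝 l)) : ulim x = l :=
  h.limUnder_eq

lemma tendsto_hyper_of_atTop {x : ℕ → ℝ} {l : ℝ} (h : Tendsto x atTop (𝓝 l)) :
    Tendsto x (Filter.hyperfilter ℕ : Filter ℕ) (𝓝 l) :=
  h.mono_left Nat.hyperfilter_le_atTop

lemma eventually_hyper_one_le : ∀ᶠ N in (Filter.hyperfilter ℕ : Filter ℕ), 1 ≤ N := by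
  have : ∀ᶠ N in atTop, 1 ≤ N := Filter.eventually_atTop.2 ⟨1, fun n hn => hn⟩
  exact Nat.hyperfilter_le_atTop this

end Ulim

/-- a recurrent RDS (some compact interval is almost surely visited
infinitely often from every starting point) admits a nonzero Radon stationary measure. -/
theorem rds_recurrent_admits_radon_stationary_measure
    {Ω : Type*} [MeasurableSpace Ω] (P : Measure Ω) [IsProbabilityMeasure P]
    {ι : Type*} [Fintype ι] [MeasurableSpace ι] [MeasurableSingletonClass ι]
    (f : ι → ℝ → ℝ)
    (hf : ∀ i, StrictMono (f i) ∧ Function.Bijective (f i))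
    (g : ℕ → Ω → ι) (hgmeas : ∀ n, Measurable (g n))
    (hindep : iIndepFun g P)
    (μ : Measure ι) [IsProbabilityMeasure μ] (hlaw : ∀ n, Measure.map (g n) P = μ)
    (F : ℕ → Ω → ℝ → ℝ)
    (hF0 : ∀ ω x, F 0 ω x = x)
    (hFS : ∀ n ω x, F (n + 1) ω x = f (g n ω) (F n ω x))
    (hshift : ∀ x : ℝ, 0 < μ {i | f i x < x} ∧ 0 < μ {i | x < f i x})
    (a b : ℝ) (hab : a ≤ b)
    (hrec : ∀ x : ℝ, P {ω | ∃ᶠ n in atTop, F n ω x ∈ Set.Icc a b} = 1) :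
    ∃ ν : Measure ℝ, ν ≠ 0 ∧ IsFiniteMeasureOnCompacts ν ∧
      ∀ A : Set ℝ, MeasurableSet A → ν A = ∑ i, μ {i} * ν (f i ⁻¹' A) := by
  classical
  -- ι is nonempty
  haveI hne : Nonempty ι := by
    by_contra h
    rw [not_nonempty_iff] at h
    have h1 : (μ : Measure ι) Set.univ = 1 := measure_univ
    rw [Set.univ_eq_empty_iff.2 h] at h1
    simp at h1
  set i₀ : ι := Classical.arbitrary ι with hi₀
  -- order isomorphisms and continuity
  set φ : ι → (ℝ ≃o ℝ) :=
    fun i => StrictMono.orderIsoOfSurjective (f i) (hf i).1 (hf i).2.2 with hφdef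
  have hφ : ∀ i x, φ i x = f i x := fun i x => rfl
  have hcont : ∀ i, Continuous (f i) := by
    intro i
    have h1 : Continuous (φ i) := (φ i).continuous
    exact h1
  have hcontinv : ∀ i, Continuous ((φ i).symm) := fun i => (φ i).symm.continuous
  have hpre : ∀ (i : ι) (u v : ℝ),
      f i ⁻¹' (Set.Ioc u v) = Set.Ioc ((φ i).symm u) ((φ i).symm v) := by
    intro i u v
    ext z
    simp only [Set.mem_preimage, Set.mem_Ioc]
    constructor
    · rintro ⟨h1, h2⟩
      constructor
      · have := (φ i).symm.strictMono h1
        rwa [← hφ i z, (φ i).symm_apply_apply] at this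
      · have := (φ i).symm.monotone h2
        rwa [← hφ i z, (φ i).symm_apply_apply] at this
    · rintro ⟨h1, h2⟩
      constructor
      · have := (φ i).strictMono h1
        rwa [(φ i).apply_symm_apply, hφ i z] at this
      · have := (φ i).monotone h2
        rwa [(φ i).apply_symm_apply, hφ i z] at this
  -- occupation measures
  set e : ℕ → ℝ → Set ℝ → ℝ≥0∞ := fun n x B => P {ω | F n ω x ∈ B} with he
  have heone : ∀ n x B, e n x B ≤ 1 := fun n x B => prob_le_one
  have hestep : ∀ n (x : ℝ) (B : Set ℝ), e (n+1) x B = ∑ i : ι, μ {i} * e n x (f i ⁻¹' B) :=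
    fun n x B => onestep i₀ hgmeas hindep hlaw hF0 hFS n x B
  set S : ℕ → Set ℝ → ℝ≥0∞ := fun N B => ∑ n ∈ Finset.range N, e n a B with hSdef
  set m : ℕ → ℝ≥0∞ := fun N => S N (Set.Icc (a-1) (b+1)) with hm
  have hSmono : ∀ N (B B' : Set ℝ), B ⊆ B' → S N B ≤ S N B' :=
    fun N B B' hBB => Finset.sum_le_sum (fun n _ => measure_mono (fun ω hω => hBB hω))
  have hSfin : ∀ N B, S N B ≤ (N : ℝ≥0∞) := by
    intro N B
    calc S N B ≤ ∑ _n ∈ Finset.range N, 1 := Finset.sum_le_sum (fun n _ => heone n a B)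
      _ = N := by simp
  have hSne : ∀ N B, S N B ≠ ∞ := fun N B => ((hSfin N B).trans_lt (ENNReal.natCast_lt_top N)).ne
  have hm1 : ∀ N, 1 ≤ N → 1 ≤ m N := by
    intro N hN
    have h0 : e 0 a (Set.Icc (a-1) (b+1)) = 1 := by
      show P {ω : Ω | F 0 ω a ∈ Set.Icc (a-1) (b+1)} = 1
      have heq : {ω : Ω | F 0 ω a ∈ Set.Icc (a-1) (b+1)} = Set.univ := by
        ext ω
        simp only [hF0, Set.mem_setOf_eq, Set.mem_Icc, Set.mem_univ, iff_true]
        constructor <;> linarith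
      rw [heq, measure_univ]
    calc (1 : ℝ≥0∞) = e 0 a (Set.Icc (a-1) (b+1)) := h0.symm
      _ ≤ m N := Finset.single_le_sum
          (f := fun n => e n a (Set.Icc (a-1) (b+1)))
          (fun n _ => zero_le) (Finset.mem_range.2 hN)
  have hmtop : Tendsto m atTop (𝓝 ∞) := by
    have hocc := occupation_top hgmeas hcont hF0 hFS a b a (hrec a)
    rw [ENNReal.tendsto_nhds_top_iff_nat] at hocc ⊢
    intro k
    filter_upwards [hocc k] with N hN
    exact hN.trans_le (hSmono N _ _ (Set.Icc_subset_Icc (by linarith) (by linarith)))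
  -- the crucial local finiteness bound
  have hcrux : ∀ c d : ℝ, ∃ C : ℝ≥0∞, C ≠ ∞ ∧ ∀ N, S N (Set.Icc c d) ≤ C * m N := by
    intro c d
    obtain ⟨M, p₀, hM0, hp₀pos, huni⟩ :=
      uniform_hitting i₀ hcont hgmeas hindep hlaw hF0 hFS a b hrec c d
    set q : ℝ≥0∞ := min p₀ 1 with hq
    have hq0 : q ≠ 0 := by
      have : 0 < q := lt_min hp₀pos zero_lt_one
      exact this.ne'
    have hqtop : q ≠ ∞ := ((min_le_right _ _).trans_lt (by norm_num)).ne
    have huni' : ∀ y ∈ Set.Icc c d, ∃ (ℓ : ℕ) (w : Fin ℓ → ι), 0 < ℓ ∧ ℓ ≤ M ∧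
        (q ≤ ∏ k, μ {w k}) ∧ wAct f (extW i₀ w) ℓ y ∈ Set.Icc (a-1) (b+1) := by
      intro y hy
      obtain ⟨ℓ, w, h1, h2, h3, h4⟩ := huni y hy
      exact ⟨ℓ, w, h1, h2, (min_le_left _ _).trans h3, Set.Ioo_subset_Icc_self h4⟩
    have hn : ∀ n, q * e n a (Set.Icc c d)
        ≤ ∑ j ∈ Finset.Icc 1 M, e (n+j) a (Set.Icc (a-1) (b+1)) :=
      fun n => hitbound i₀ hgmeas hindep hlaw hF0 hFS _ _ M q huni' a n
    have hsum : ∀ N, q * S N (Set.Icc c d) ≤ (M : ℝ≥0∞) * m (N + M) := by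
      intro N
      calc q * S N (Set.Icc c d)
          = ∑ n ∈ Finset.range N, q * e n a (Set.Icc c d) := Finset.mul_sum _ _ _
        _ ≤ ∑ n ∈ Finset.range N, ∑ j ∈ Finset.Icc 1 M, e (n+j) a (Set.Icc (a-1) (b+1)) :=
            Finset.sum_le_sum (fun n _ => hn n)
        _ = ∑ j ∈ Finset.Icc 1 M, ∑ n ∈ Finset.range N, e (n+j) a (Set.Icc (a-1) (b+1)) :=
            Finset.sum_comm
        _ ≤ ∑ _j ∈ Finset.Icc 1 M, m (N + M) := by
            refine Finset.sum_le_sum (fun j hj => ?_)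
            obtain ⟨hj1, hjM⟩ := Finset.mem_Icc.1 hj
            have hinj : Function.Injective (fun n : ℕ => n + j) := add_left_injective j
            calc ∑ n ∈ Finset.range N, e (n+j) a (Set.Icc (a-1) (b+1))
                = ∑ k ∈ (Finset.range N).image (fun n => n + j), e k a (Set.Icc (a-1) (b+1)) := by
                  rw [Finset.sum_image (fun x _ y _ hxy => hinj hxy)]
              _ ≤ m (N + M) := by
                  refine Finset.sum_le_sum_of_subset (fun k hk => ?_)
                  obtain ⟨n, hn', rfl⟩ := Finset.mem_image.1 hk
                  rw [Finset.mem_range] at hn' ⊢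
                  omega
        _ = (M : ℝ≥0∞) * m (N + M) := by
            rw [Finset.sum_const, Nat.card_Icc]
            simp [nsmul_eq_mul]
    refine ⟨q⁻¹ * ((M : ℝ≥0∞) * ((M : ℝ≥0∞) + 1)), ?_, ?_⟩
    · refine ENNReal.mul_ne_top (ENNReal.inv_ne_top.2 hq0) (ENNReal.mul_ne_top ?_ ?_)
      · exact ENNReal.natCast_ne_top M
      · exact ENNReal.add_ne_top.2 ⟨ENNReal.natCast_ne_top M, ENNReal.one_ne_top⟩
    · intro N
      rcases Nat.eq_zero_or_pos N with h0 | hNpos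
      · subst h0
        have : S 0 (Set.Icc c d) = 0 := by simp [hSdef]
        rw [this]
        exact zero_le
      · have h1 : m (N + M) ≤ m N + M := by
          show S (N+M) (Set.Icc (a-1) (b+1)) ≤ S N (Set.Icc (a-1) (b+1)) + M
          rw [hSdef]
          simp only []
          rw [Finset.range_add, Finset.sum_union]
          · refine add_le_add_right ?_ _
            calc ∑ k ∈ (Finset.range M).map (addLeftEmbedding N), e k a (Set.Icc (a-1) (b+1))
                ≤ ∑ _k ∈ (Finset.range M).map (addLeftEmbedding N), 1 :=
                  Finset.sum_le_sum (fun k _ => heone k a _)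
              _ = M := by simp
          · refine Finset.disjoint_left.2 (fun k hk hk' => ?_)
            rw [Finset.mem_range] at hk
            obtain ⟨n', hn', hEq⟩ := Finset.mem_map.1 hk'
            have : N + n' = k := hEq
            omega
        have h2 : m (N + M) ≤ ((M : ℝ≥0∞) + 1) * m N := by
          calc m (N+M) ≤ m N + M := h1
            _ ≤ m N + (M : ℝ≥0∞) * m N := by
                refine add_le_add_right ?_ _
                conv_lhs => rw [← mul_one (M : ℝ≥0∞)]
                exact mul_le_mul_right (hm1 N hNpos) _
            _ = ((M : ℝ≥0∞) + 1) * m N := by ring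
        have h3 : q * S N (Set.Icc c d) ≤ (M : ℝ≥0∞) * (((M : ℝ≥0∞) + 1) * m N) :=
          (hsum N).trans (mul_le_mul_right h2 _)
        calc S N (Set.Icc c d) = (q⁻¹ * q) * S N (Set.Icc c d) := by
              rw [ENNReal.inv_mul_cancel hq0 hqtop, one_mul]
          _ = q⁻¹ * (q * S N (Set.Icc c d)) := by rw [mul_assoc]
          _ ≤ q⁻¹ * ((M : ℝ≥0∞) * (((M : ℝ≥0∞) + 1) * m N)) := mul_le_mul_right h3 _
          _ = (q⁻¹ * ((M : ℝ≥0∞) * ((M : ℝ≥0∞) + 1))) * m N := by ring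
  -- real sequences
  set mR : ℕ → ℝ := fun N => (m N).toReal with hmRdef
  have hmne : ∀ N, m N ≠ ∞ := fun N => hSne N _
  have hmR1 : ∀ N, 1 ≤ N → 1 ≤ mR N := by
    intro N hN
    rw [show (1:ℝ) = (1:ℝ≥0∞).toReal by simp]
    exact (ENNReal.toReal_le_toReal ENNReal.one_ne_top (hmne N)).2 (hm1 N hN)
  have hmRpos : ∀ N, 1 ≤ N → 0 < mR N := fun N hN => lt_of_lt_of_le zero_lt_one (hmR1 N hN)
  have hmRtop : Tendsto mR atTop atTop := by
    rw [Filter.tendsto_atTop]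
    intro K
    rw [ENNReal.tendsto_nhds_top_iff_nat] at hmtop
    filter_upwards [hmtop (Nat.ceil (max K 0))] with N hN
    have h2 : ((Nat.ceil (max K 0) : ℕ) : ℝ) ≤ mR N := by
      calc ((Nat.ceil (max K 0) : ℕ) : ℝ) = ((Nat.ceil (max K 0) : ℕ) : ℝ≥0∞).toReal := by simp
        _ ≤ (m N).toReal :=
          (ENNReal.toReal_le_toReal (ENNReal.natCast_ne_top _) (hmne N)).2 hN.le
    calc K ≤ max K 0 := le_max_left _ _
      _ ≤ Nat.ceil (max K 0) := Nat.le_ceil _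
      _ ≤ mR N := h2
  -- normalized occupation ratios
  set r : Set ℝ → ℕ → ℝ := fun B N => (S N B).toReal / mR N with hrdef
  have hrnn : ∀ B N, 0 ≤ r B N :=
    fun B N => div_nonneg ENNReal.toReal_nonneg ENNReal.toReal_nonneg
  have hbdd : ∀ (B : Set ℝ) (c d : ℝ), B ⊆ Set.Icc c d → ∃ C : ℝ, ∀ N, |r B N| ≤ C := by
    intro B c d hB
    obtain ⟨C, hCfin, hC⟩ := hcrux c d
    refine ⟨max C.toReal 0, fun N => ?_⟩
    rw [abs_of_nonneg (hrnn B N)]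
    rcases Nat.eq_zero_or_pos N with h0 | hNpos
    · subst h0
      have hz : S 0 B = 0 := by simp [hSdef]
      show (S 0 B).toReal / mR 0 ≤ _
      rw [hz]
      simp
    · have h1 : (S N B).toReal ≤ C.toReal * mR N := by
        have h2 : S N B ≤ C * m N := (hSmono N _ _ hB).trans (hC N)
        calc (S N B).toReal ≤ (C * m N).toReal :=
            (ENNReal.toReal_le_toReal (hSne N B) (ENNReal.mul_ne_top hCfin (hmne N))).2 h2
          _ = C.toReal * mR N := ENNReal.toReal_mul
      show (S N B).toReal / mR N ≤ _
      rw [div_le_iff₀ (hmRpos N hNpos)]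
      calc (S N B).toReal ≤ C.toReal * mR N := h1
        _ ≤ max C.toReal 0 * mR N :=
          mul_le_mul_of_nonneg_right (le_max_left _ _) (hmRpos N hNpos).le
  -- the H function
  set H : ℝ → ℝ → ℝ := fun s t => ulim (r (Set.Ioc s t)) with hHdef
  have hbddIoc : ∀ s t : ℝ, ∃ C : ℝ, ∀ N, |r (Set.Ioc s t) N| ≤ C :=
    fun s t => hbdd _ s t Set.Ioc_subset_Icc_self
  have hHtendsto : ∀ s t : ℝ,
      Tendsto (r (Set.Ioc s t)) (Filter.hyperfilter ℕ : Filter ℕ) (𝓝 (H s t)) :=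
    fun s t => ulim_tendsto (hbddIoc s t)
  have hHnn : ∀ s t : ℝ, 0 ≤ H s t := fun s t =>
    ge_of_tendsto (hHtendsto s t) (Filter.Eventually.of_forall (fun N => hrnn _ N))
  have hSIocadd : ∀ (N : ℕ) (s t u : ℝ), s ≤ t → t ≤ u →
      S N (Set.Ioc s u) = S N (Set.Ioc s t) + S N (Set.Ioc t u) := by
    intro N s t u hst htu
    show (∑ n ∈ Finset.range N, e n a (Set.Ioc s u)) = _
    rw [← Finset.sum_add_distrib]
    refine Finset.sum_congr rfl (fun n _ => ?_)
    show P _ = P _ + P _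
    have hsplit : {ω : Ω | F n ω a ∈ Set.Ioc s u}
        = {ω | F n ω a ∈ Set.Ioc s t} ∪ {ω | F n ω a ∈ Set.Ioc t u} := by
      ext ω
      simp only [Set.mem_setOf_eq, Set.mem_union, ← Set.Ioc_union_Ioc_eq_Ioc hst htu,
        Set.mem_union]
    rw [hsplit]
    refine measure_union ?_ ((measX hgmeas hcont hF0 hFS a n) measurableSet_Ioc)
    refine Set.disjoint_left.2 (fun ω h1 h2 => ?_)
    simp only [Set.mem_setOf_eq, Set.mem_Ioc] at h1 h2
    linarith [h1.2, h2.1]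
  have hradd : ∀ (s t u : ℝ), s ≤ t → t ≤ u → ∀ N,
      r (Set.Ioc s u) N = r (Set.Ioc s t) N + r (Set.Ioc t u) N := by
    intro s t u hst htu N
    show (S N _).toReal / mR N = (S N _).toReal / mR N + (S N _).toReal / mR N
    rw [hSIocadd N s t u hst htu, ENNReal.toReal_add (hSne N _) (hSne N _), add_div]
  have hHadd : ∀ (s t u : ℝ), s ≤ t → t ≤ u → H s u = H s t + H t u := by
    intro s t u hst htu
    refine ulim_unique ?_
    exact ((hHtendsto s t).add (hHtendsto t u)).congr
      (fun N => (hradd s t u hst htu N).symm)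
  -- error terms vanish
  have herrtend : ∀ (c : ℕ → ℝ≥0∞), (∀ N, c N ≤ 1) →
      Tendsto (fun N => (c N).toReal / mR N) atTop (𝓝 0) := by
    intro c hc
    have hinv : Tendsto (fun N => (mR N)⁻¹) atTop (𝓝 0) := hmRtop.inv_tendsto_atTop
    refine squeeze_zero' ?_ ?_ hinv
    · filter_upwards [Filter.eventually_atTop.2 ⟨1, fun n hn => hn⟩] with N hN
      exact div_nonneg ENNReal.toReal_nonneg (hmRpos N hN).le
    · filter_upwards [Filter.eventually_atTop.2 ⟨1, fun n hn => hn⟩] with N hN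
      have h1 : (c N).toReal ≤ 1 := by
        rw [show (1:ℝ) = (1:ℝ≥0∞).toReal by simp]
        exact (ENNReal.toReal_le_toReal
          ((lt_of_le_of_lt (hc N) ENNReal.one_lt_top).ne) ENNReal.one_ne_top).2 (hc N)
      rw [div_eq_mul_inv]
      calc (c N).toReal * (mR N)⁻¹ ≤ 1 * (mR N)⁻¹ :=
            mul_le_mul_of_nonneg_right h1 (inv_nonneg.2 (hmRpos N hN).le)
        _ = (mR N)⁻¹ := one_mul _
  -- the exact stationarity identity for H
  have hkey : ∀ s t : ℝ, s ≤ t →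
      H s t = ∑ i : ι, (μ {i}).toReal * H ((φ i).symm s) ((φ i).symm t) := by
    intro s t hst
    have hene : ∀ (n : ℕ) (B : Set ℝ), e n a B ≠ ∞ :=
      fun n B => (lt_of_le_of_lt (heone n a B) ENNReal.one_lt_top).ne
    have hpre1 : ∀ (N : ℕ) (B : Set ℝ),
        S N B + e N a B = (∑ i : ι, μ {i} * S N (f i ⁻¹' B)) + e 0 a B := by
      intro N B
      have h1 : ∑ i : ι, μ {i} * S N (f i ⁻¹' B) = ∑ n ∈ Finset.range N, e (n+1) a B := by
        calc ∑ i : ι, μ {i} * S N (f i ⁻¹' B)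
            = ∑ i : ι, ∑ n ∈ Finset.range N, μ {i} * e n a (f i ⁻¹' B) := by
              refine Finset.sum_congr rfl (fun i _ => ?_)
              exact Finset.mul_sum _ _ _
          _ = ∑ n ∈ Finset.range N, ∑ i : ι, μ {i} * e n a (f i ⁻¹' B) := Finset.sum_comm
          _ = ∑ n ∈ Finset.range N, e (n+1) a B :=
              Finset.sum_congr rfl (fun n _ => (hestep n a B).symm)
      rw [h1]
      have h2 : S N B + e N a B = ∑ n ∈ Finset.range (N+1), e n a B :=
        (Finset.sum_range_succ _ N).symm
      have h3 : ∑ n ∈ Finset.range (N+1), e n a B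
          = (∑ n ∈ Finset.range N, e (n+1) a B) + e 0 a B :=
        Finset.sum_range_succ' (fun n => e n a B) N
      rw [h2, h3]
    set B := Set.Ioc s t with hB
    have hreal : ∀ N, 1 ≤ N → r B N + (e N a B).toReal / mR N
        = (∑ i : ι, (μ {i}).toReal * r (f i ⁻¹' B) N) + (e 0 a B).toReal / mR N := by
      intro N hN
      have hsumne : (∑ i : ι, μ {i} * S N (f i ⁻¹' B)) ≠ ∞ := by
        refine (ENNReal.sum_lt_top.2 (fun i _ => ?_)).ne
        exact ENNReal.mul_lt_top (lt_of_le_of_lt prob_le_one ENNReal.one_lt_top)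
          ((hSne N _).lt_top)
      have h2 : (S N B).toReal + (e N a B).toReal
          = (∑ i : ι, (μ {i}).toReal * (S N (f i ⁻¹' B)).toReal) + (e 0 a B).toReal := by
        rw [← ENNReal.toReal_add (hSne N B) (hene N B), hpre1 N B,
          ENNReal.toReal_add hsumne (hene 0 B), ENNReal.toReal_sum
            (fun i _ => (ENNReal.mul_lt_top (lt_of_le_of_lt prob_le_one ENNReal.one_lt_top)
              ((hSne N _).lt_top)).ne)]
        congr 1
        exact Finset.sum_congr rfl (fun i _ => ENNReal.toReal_mul)
      calc r B N + (e N a B).toReal / mR N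
          = ((S N B).toReal + (e N a B).toReal) / mR N := (add_div _ _ _).symm
        _ = ((∑ i : ι, (μ {i}).toReal * (S N (f i ⁻¹' B)).toReal) + (e 0 a B).toReal) / mR N := by
            rw [h2]
        _ = (∑ i : ι, (μ {i}).toReal * (S N (f i ⁻¹' B)).toReal)/mR N
            + (e 0 a B).toReal / mR N := add_div _ _ _
        _ = (∑ i : ι, (μ {i}).toReal * r (f i ⁻¹' B) N) + (e 0 a B).toReal / mR N := by
            congr 1
            rw [Finset.sum_div]
            exact Finset.sum_congr rfl (fun i _ => mul_div_assoc _ _ _)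
    have hT1 : Tendsto (fun N => r B N + (e N a B).toReal / mR N)
        (Filter.hyperfilter ℕ : Filter ℕ) (𝓝 (H s t + 0)) :=
      (hHtendsto s t).add (tendsto_hyper_of_atTop
        (herrtend (fun N => e N a B) (fun N => heone N a B)))
    have hT2 : Tendsto (fun N => (∑ i : ι, (μ {i}).toReal * r (f i ⁻¹' B) N)
          + (e 0 a B).toReal / mR N)
        (Filter.hyperfilter ℕ : Filter ℕ)
        (𝓝 ((∑ i : ι, (μ {i}).toReal * H ((φ i).symm s) ((φ i).symm t)) + 0)) := by
      refine Tendsto.add ?_ (tendsto_hyper_of_atTop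
        (herrtend (fun _ => e 0 a B) (fun _ => heone 0 a B)))
      refine tendsto_finset_sum _ (fun i _ => ?_)
      have heq : r (f i ⁻¹' B) = r (Set.Ioc ((φ i).symm s) ((φ i).symm t)) := by
        rw [hB, hpre]
      rw [heq]
      exact (hHtendsto _ _).const_mul _
    have hT1' : Tendsto (fun N => r B N + (e N a B).toReal / mR N)
        (Filter.hyperfilter ℕ : Filter ℕ)
        (𝓝 ((∑ i : ι, (μ {i}).toReal * H ((φ i).symm s) ((φ i).symm t)) + 0)) := by
      refine hT2.congr' ?_
      filter_upwards [eventually_hyper_one_le] with N hN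
      exact (hreal N hN).symm
    have hfin := tendsto_nhds_unique hT1 hT1'
    simpa using hfin
  -- the CDF-like function
  set G : ℝ → ℝ := fun t => if a ≤ t then H a t else - H t a with hGdef
  have hGdiff : ∀ s t : ℝ, s ≤ t → G t - G s = H s t := by
    intro s t hst
    by_cases hs : a ≤ s
    · have ht : a ≤ t := le_trans hs hst
      show (if a ≤ t then H a t else - H t a) - (if a ≤ s then H a s else - H s a) = H s t
      rw [if_pos hs, if_pos ht]
      have := hHadd a s t hs hst
      linarith
    · push_neg at hs
      by_cases ht : a ≤ t
      · show (if a ≤ t then H a t else - H t a) - (if a ≤ s then H a s else - H s a) = H s t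
        rw [if_pos ht, if_neg (not_le.2 hs)]
        have := hHadd s a t hs.le ht
        linarith
      · push_neg at ht
        show (if a ≤ t then H a t else - H t a) - (if a ≤ s then H a s else - H s a) = H s t
        rw [if_neg (not_le.2 hs), if_neg (not_le.2 ht)]
        have := hHadd s t a hst ht.le
        linarith
  have hGmono : Monotone G := by
    intro s t hst
    have h1 := hGdiff s t hst
    have h2 := hHnn s t
    linarith
  set ν : Measure ℝ := hGmono.stieltjesFunction.measure with hν
  have hνIoc : ∀ s t : ℝ, ν (Set.Ioc s t)
      = ENNReal.ofReal (Function.rightLim G t - Function.rightLim G s) := by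
    intro s t
    rw [hν, StieltjesFunction.measure_Ioc, hGmono.stieltjesFunction_eq,
      hGmono.stieltjesFunction_eq]
  -- right limits along explicit sequences
  have hrl : ∀ t : ℝ, Tendsto (fun k : ℕ => G (t + 1/((k:ℝ)+1))) atTop
      (𝓝 (Function.rightLim G t)) := by
    intro t
    have h1 : Tendsto (fun k : ℕ => t + 1/((k:ℝ)+1)) atTop (𝓝[>] t) := by
      refine tendsto_nhdsWithin_of_tendsto_nhds_of_eventually_within _ ?_ ?_
      · have h2 : Tendsto (fun k : ℕ => t + 1/((k:ℝ)+1)) atTop (𝓝 (t + 0)) :=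
          tendsto_const_nhds.add tendsto_one_div_add_atTop_nhds_zero_nat
        simpa using h2
      · refine Filter.Eventually.of_forall (fun k => ?_)
        have hp : 0 < 1/((k:ℝ)+1) := by positivity
        simp only [Set.mem_Ioi]
        linarith
    exact (hGmono.tendsto_rightLim t).comp h1
  have hrlφ : ∀ (i : ι) (t : ℝ),
      Tendsto (fun k : ℕ => G ((φ i).symm (t + 1/((k:ℝ)+1)))) atTop
        (𝓝 (Function.rightLim G ((φ i).symm t))) := by
    intro i t
    have h1 : Tendsto (fun k : ℕ => (φ i).symm (t + 1/((k:ℝ)+1))) atTop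
        (𝓝[>] ((φ i).symm t)) := by
      refine tendsto_nhdsWithin_of_tendsto_nhds_of_eventually_within _ ?_ ?_
      · have h2 : Tendsto (fun k : ℕ => t + 1/((k:ℝ)+1)) atTop (𝓝 t) := by
          simpa using
            (tendsto_const_nhds.add tendsto_one_div_add_atTop_nhds_zero_nat :
              Tendsto (fun k : ℕ => t + 1/((k:ℝ)+1)) atTop (𝓝 (t+0)))
        exact ((hcontinv i).tendsto t).comp h2
      · refine Filter.Eventually.of_forall (fun k => ?_)
        have hp : 0 < 1/((k:ℝ)+1) := by positivity
        have hlt : t < t + 1/((k:ℝ)+1) := by linarith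
        exact (φ i).symm.strictMono hlt
    exact (hGmono.tendsto_rightLim _).comp h1
  -- stationarity of ν on half-open intervals
  have hstat : ∀ s t : ℝ, s ≤ t →
      ν (Set.Ioc s t) = ∑ i : ι, μ {i} * ν (f i ⁻¹' (Set.Ioc s t)) := by
    intro s t hst
    have hΔ : Function.rightLim G t - Function.rightLim G s
        = ∑ i : ι, (μ {i}).toReal *
          (Function.rightLim G ((φ i).symm t) - Function.rightLim G ((φ i).symm s)) := by
      have hTL : Tendsto (fun k : ℕ => G (t + 1/((k:ℝ)+1)) - G (s + 1/((k:ℝ)+1))) atTop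
          (𝓝 (Function.rightLim G t - Function.rightLim G s)) := (hrl t).sub (hrl s)
      have hTR : Tendsto (fun k : ℕ => ∑ i : ι, (μ {i}).toReal *
            (G ((φ i).symm (t + 1/((k:ℝ)+1))) - G ((φ i).symm (s + 1/((k:ℝ)+1))))) atTop
          (𝓝 (∑ i : ι, (μ {i}).toReal *
            (Function.rightLim G ((φ i).symm t) - Function.rightLim G ((φ i).symm s)))) :=
        tendsto_finset_sum _ (fun i _ => ((hrlφ i t).sub (hrlφ i s)).const_mul _)
      refine tendsto_nhds_unique (hTL.congr (fun k => ?_)) hTR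
      have h1 : s + 1/((k:ℝ)+1) ≤ t + 1/((k:ℝ)+1) := by linarith
      rw [hGdiff _ _ h1, hkey _ _ h1]
      refine Finset.sum_congr rfl (fun i _ => ?_)
      rw [hGdiff _ _ ((φ i).symm.monotone h1)]
    rw [hνIoc, hΔ, ENNReal.ofReal_sum_of_nonneg (fun i _ =>
      mul_nonneg ENNReal.toReal_nonneg
        (sub_nonneg.2 (hGmono.rightLim ((φ i).symm.monotone hst))))]
    refine Finset.sum_congr rfl (fun i _ => ?_)
    rw [ENNReal.ofReal_mul ENNReal.toReal_nonneg,
      ENNReal.ofReal_toReal ((lt_of_le_of_lt prob_le_one ENNReal.one_lt_top).ne),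
      hpre i s t, hνIoc]
  haveI hνloc : IsLocallyFiniteMeasure ν := by
    rw [hν]; infer_instance
  set ν' : Measure ℝ := ∑ i : ι, μ {i} • Measure.map (f i) ν with hν'def
  have hν'app : ∀ A : Set ℝ, MeasurableSet A → ν' A = ∑ i : ι, μ {i} * ν (f i ⁻¹' A) := by
    intro A hA
    rw [hν'def]
    rw [Measure.finset_sum_apply]
    refine Finset.sum_congr rfl (fun i _ => ?_)
    rw [Measure.smul_apply, Measure.map_apply (hcont i).measurable hA, smul_eq_mul]
  have hext : ν = ν' := by
    refine Measure.ext_of_Ioc ν ν' (fun s t hst => ?_)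
    rw [hstat s t hst.le, hν'app _ measurableSet_Ioc]
  refine ⟨ν, ?_, ?_, ?_⟩
  · -- ν ≠ 0
    intro h0
    have h1 : ν (Set.Ioc (a-3) (b+1)) = 0 := by rw [h0]; rfl
    have h2 : (1:ℝ) ≤ H (a-2) (b+1) := by
      refine ge_of_tendsto (hHtendsto (a-2) (b+1)) ?_
      filter_upwards [eventually_hyper_one_le] with N hN
      have h3 : m N ≤ S N (Set.Ioc (a-2) (b+1)) := by
        refine hSmono N _ _ ?_
        intro z hz
        simp only [Set.mem_Icc] at hz
        simp only [Set.mem_Ioc]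
        constructor <;> linarith [hz.1, hz.2]
      show 1 ≤ (S N (Set.Ioc (a-2) (b+1))).toReal / mR N
      rw [le_div_iff₀ (hmRpos N hN)]
      have h4 : mR N ≤ (S N (Set.Ioc (a-2) (b+1))).toReal :=
        (ENNReal.toReal_le_toReal (hmne N) (hSne N _)).2 h3
      linarith
    have h5 : G (b+1) ≤ Function.rightLim G (b+1) := hGmono.le_rightLim le_rfl
    have h6 : Function.rightLim G (a-3) ≤ G (a-2) := hGmono.rightLim_le (by linarith)
    have h7 : G (b+1) - G (a-2) = H (a-2) (b+1) := hGdiff _ _ (by linarith)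
    rw [hνIoc] at h1
    have h8 := ENNReal.ofReal_eq_zero.1 h1
    linarith
  · exact isFiniteMeasureOnCompacts_of_isLocallyFiniteMeasure
  · intro A hA
    rw [show ν A = ν' A from by rw [← hext]]
    exact hν'app A hA
end
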